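/- arXiv:0710.2767 — 4 statements merged into one kernel-verified Lean document; each statement's English description precedes it below -/
import Mathlib

section
/- With the notation of the context, the number of irreducible polynomials satisfies the Möbius-inversion formula P_m(a,s,h) = (1/m) · Σ_{t | m} μ(m/t) · N_t(a,s,h), where μ is the Möbius function and the sum runs over the positive divisors t of m. -/
noncomputable section

open Complex Polynomial Classical

/-- `N_t(a,s,h)`: the number of elements `x` of the subfield `F_{q^t}` of `K = F_{q^m}`
with `Tr_{K/F}(x) = a` and `N_{K/F}(x) ∈ g^h·⟨g^s⟩`. -/
def NN (F K : Type*) [Field F] [Fintype F] [Field K] [Fintype K] [Algebra F K]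
    (g : F) (s h t : ℕ) (a : F) : ℕ :=
  Nat.card {x : K // x ^ (Fintype.card F) ^ t = x ∧ Algebra.trace F K x = a ∧
    ∃ k : ℕ, Algebra.norm F x = g ^ (h + s * k)}

/-- `P_m(a,s,h)`: the number of monic irreducible `f = x^m − a x^{m-1} + ⋯ + (−1)^m b`
of degree `m` over `F` with `b ∈ g^h·⟨g^s⟩`. -/
def PP (F : Type*) [Field F] [Fintype F] (g : F) (m s h : ℕ) (a : F) : ℕ :=
  Nat.card {f : Polynomial F // f.Monic ∧ f.natDegree = m ∧ Irreducible f ∧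
    f.coeff (m - 1) = -a ∧ ∃ k : ℕ, (-1 : F) ^ m * f.coeff 0 = g ^ (h + s * k)}

section Aux

open FiniteField IntermediateField Module

theorem MyAux.charP_of_card {F : Type*} [Field F] [Fintype F] (p R : ℕ) [Fact p.Prime]
    (hR : 0 < R) (hF : Fintype.card F = p ^ R) : CharP F p := by
  obtain ⟨n, hp0, hcard⟩ := FiniteField.card F (ringChar F)
  have : p = ringChar F := by
    have hh := hF ▸ hcard
    have hdvd : p ∣ (ringChar F) ^ (n : ℕ) := hh ▸ dvd_pow_self p hR.ne'
    exact (Nat.prime_dvd_prime_iff_eq Fact.out hp0).1 (Nat.Prime.dvd_of_dvd_pow Fact.out hdvd)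
  rw [this]; exact ringChar.charP F

variable {F K : Type*} [Field F] [Fintype F] [Field K] [Fintype K] [Algebra F K]

theorem MyAux.pow_q_d (x : K) : x ^ (Fintype.card F) ^ (minpoly F x).natDegree = x := by
  have hint : IsIntegral F x := IsIntegral.of_finite F x
  haveI : Fintype F⟮x⟯ := Fintype.ofFinite _
  have hcard : Fintype.card F⟮x⟯ = Fintype.card F ^ (minpoly F x).natDegree := by
    rw [card_eq_pow_finrank (K := F) (V := F⟮x⟯), IntermediateField.adjoin.finrank hint]
  have hgen : (AdjoinSimple.gen F x) ^ (Fintype.card F⟮x⟯) = AdjoinSimple.gen F x :=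
    FiniteField.pow_card _
  rw [hcard] at hgen
  have := congrArg (algebraMap F⟮x⟯ K) hgen
  rwa [map_pow, IntermediateField.AdjoinSimple.algebraMap_gen] at this

theorem MyAux.pow_q_dvd (x : K) {d t : ℕ} (hd : d ∣ t)
    (hx : x ^ (Fintype.card F) ^ d = x) : x ^ (Fintype.card F) ^ t = x := by
  obtain ⟨k, rfl⟩ := hd
  induction k with
  | zero => simpa using hx
  | succ k ih => rw [Nat.mul_succ, pow_add, pow_mul, ih]; exact hx

theorem MyAux.contra_lemma (x : K) (r : ℕ) (φ : K →+* K)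
    (hφ : ∀ y : K, φ y = y ^ (Fintype.card F) ^ r)
    (hr0 : r ≠ 0) (hrd : r < (minpoly F x).natDegree)
    (hxr : x ^ (Fintype.card F) ^ r = x) : False := by
  set q := Fintype.card F with hq
  have h1q : 1 < q := Fintype.one_lt_card
  set d := (minpoly F x).natDegree
  set S : Subfield K := φ.eqLocusField (RingHom.id K) with hS
  have hmem : ∀ y : K, y ∈ S ↔ y ^ q ^ r = y := by
    intro y
    constructor
    · intro hy; have : φ y = y := hy; rwa [hφ] at this
    · intro hy; show φ y = RingHom.id K y; rw [hφ, hy]; rfl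
  have halg : ∀ c : F, algebraMap F K c ∈ S := by
    intro c
    rw [hmem, ← map_pow, FiniteField.pow_card_pow]
  set E : IntermediateField F K := S.toIntermediateField halg with hE
  have hxE : x ∈ E := (hmem x).2 hxr
  have hle : F⟮x⟯ ≤ E := by
    rw [IntermediateField.adjoin_le_iff]
    simpa using hxE
  set P : K[X] := X ^ q ^ r - X with hP
  have hqr1 : 1 < q ^ r := Nat.one_lt_pow hr0 h1q
  have hP0 : P ≠ 0 := FiniteField.X_pow_card_sub_X_ne_zero K hqr1
  have hPdeg : P.natDegree = q ^ r := FiniteField.X_pow_card_sub_X_natDegree_eq K hqr1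
  haveI : Fintype F⟮x⟯ := Fintype.ofFinite _
  have hcard : Fintype.card F⟮x⟯ = q ^ d := by
    rw [card_eq_pow_finrank (K := F) (V := F⟮x⟯),
      IntermediateField.adjoin.finrank (IsIntegral.of_finite F x)]
  have hinj : ∀ y ∈ (Finset.univ : Finset F⟮x⟯), (y : K) ∈ P.roots.toFinset := by
    intro y _
    rw [Multiset.mem_toFinset, mem_roots hP0]
    show P.eval (y : K) = 0
    have : (y : K) ^ q ^ r = y := (hmem y).1 (hle y.2)
    simp [hP, this]
  have hle2 : Fintype.card F⟮x⟯ ≤ (P.roots.toFinset).card := by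
    rw [← Finset.card_univ]
    exact Finset.card_le_card_of_injOn _ hinj (fun a _ b _ hab => Subtype.ext hab)
  have hle3 : (P.roots.toFinset).card ≤ q ^ r := by
    calc (P.roots.toFinset).card ≤ Multiset.card P.roots := Multiset.toFinset_card_le _
    _ ≤ P.natDegree := P.card_roots'
    _ = q ^ r := hPdeg
  have := hcard ▸ le_trans hle2 hle3
  exact absurd this (not_le.2 (Nat.pow_lt_pow_right h1q hrd))

/-- Key equivalence: `x^(q^t) = x` iff the degree of `x` over `F` divides `t`. -/
theorem MyAux.key_iff (p R : ℕ) [Fact p.Prime] [CharP K p] (hF : Fintype.card F = p ^ R)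
    (t : ℕ) (x : K) :
    x ^ (Fintype.card F) ^ t = x ↔ (minpoly F x).natDegree ∣ t := by
  haveI : ExpChar K p := ExpChar.prime Fact.out
  set q := Fintype.card F with hq
  set d := (minpoly F x).natDegree with hdd
  have hd0 : 0 < d := minpoly.natDegree_pos (IsIntegral.of_finite F x)
  have hxd : x ^ q ^ d = x := MyAux.pow_q_d x
  constructor
  · intro hxt
    have hmod : ∀ n : ℕ, x ^ q ^ n = x → x ^ q ^ (n % d) = x := by
      intro n
      induction n using Nat.strong_induction_on with
      | _ n ih =>
        intro hn
        by_cases hlt : n < d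
        · rwa [Nat.mod_eq_of_lt hlt]
        · push_neg at hlt
          rw [Nat.mod_eq_sub_mod hlt]
          refine ih (n - d) (by omega) ?_
          have hinj : Function.Injective (iterateFrobenius K p (R * d)) :=
            (iterateFrobenius K p (R * d)).injective
          apply hinj
          have hev : ∀ y : K, iterateFrobenius K p (R * d) y = y ^ q ^ d := by
            intro y; rw [iterateFrobenius_def, pow_mul, ← hF]
          rw [hev, hev, ← pow_mul, ← pow_add, Nat.sub_add_cancel hlt, hn, hxd]
    have hr := hmod t hxt
    by_cases hr0 : t % d = 0
    · exact Nat.dvd_of_mod_eq_zero hr0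
    · exact absurd hr (fun habs => MyAux.contra_lemma x (t % d)
        (iterateFrobenius K p (R * (t % d)))
        (fun y => by rw [iterateFrobenius_def, pow_mul, ← hF])
        hr0 (Nat.mod_lt _ hd0) habs)
  · intro hdt
    exact MyAux.pow_q_dvd x hdt hxd

theorem MyAux.trace_norm_eq {m : ℕ} (hm : 0 < m) (hfin : finrank F K = m) (x : K)
    (hdeg : (minpoly F x).natDegree = m) :
    Algebra.trace F K x = -((minpoly F x).coeff (m - 1)) ∧
      Algebra.norm F x = (-1) ^ m * (minpoly F x).coeff 0 := by
  have hint : IsIntegral F x := IsIntegral.of_finite F x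
  have htop : F⟮x⟯ = ⊤ := by
    rw [Field.primitive_element_iff_minpoly_natDegree_eq, hdeg, hfin]
  let e : F⟮x⟯ ≃ₐ[F] K := (IntermediateField.equivOfEq htop).trans IntermediateField.topEquiv
  let pb : PowerBasis F K := (IntermediateField.adjoin.powerBasis hint).map e
  have hgen : pb.gen = x := rfl
  have hdim : pb.dim = m := by
    rw [← PowerBasis.natDegree_minpoly pb, hgen, hdeg]
  constructor
  · rw [← hgen, PowerBasis.trace_gen_eq_nextCoeff_minpoly, hgen,
      nextCoeff_of_natDegree_pos (by rw [hdeg]; exact hm), hdeg]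
  · rw [← hgen, Algebra.PowerBasis.norm_gen_eq_coeff_zero_minpoly, hgen, hdim]

theorem MyAux.roots_card {m : ℕ} (hK : Fintype.card K = Fintype.card F ^ m)
    (f : F[X]) (hmonic : f.Monic) (hdeg : f.natDegree = m) (hirr : Irreducible f) :
    ((f.map (algebraMap F K)).roots).toFinset.card = m := by
  set q := Fintype.card F with hq
  have hf0 : f ≠ 0 := hmonic.ne_zero
  haveI : Fact (Irreducible f) := ⟨hirr⟩
  let L := AdjoinRoot f
  haveI : FiniteDimensional F L := PowerBasis.finite (AdjoinRoot.powerBasis hf0)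
  haveI : Finite L := Module.finite_of_finite F
  haveI : Fintype L := Fintype.ofFinite _
  have hcardL : Fintype.card L = q ^ m := by
    rw [card_eq_pow_finrank (K := F) (V := L), (AdjoinRoot.powerBasis hf0).finrank,
      AdjoinRoot.powerBasis_dim, hdeg]
  have hroot : (AdjoinRoot.root f) ^ q ^ m = AdjoinRoot.root f := by
    rw [← hcardL]; exact FiniteField.pow_card _
  have haev : (Polynomial.aeval (AdjoinRoot.root f)) ((X : F[X]) ^ q ^ m - X) = 0 := by
    rw [map_sub, map_pow, aeval_X, hroot, sub_self]
  have hminp : minpoly F (AdjoinRoot.root f) = f := by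
    rw [AdjoinRoot.minpoly_root hf0, hmonic.leadingCoeff, inv_one, map_one, mul_one]
  have hdvd : f ∣ (X : F[X]) ^ q ^ m - X := hminp ▸ minpoly.dvd F _ haev
  have hdvdK : f.map (algebraMap F K) ∣ (X : K[X]) ^ q ^ m - X := by
    have := Polynomial.map_dvd (algebraMap F K) hdvd
    rwa [Polynomial.map_sub, Polynomial.map_pow, Polynomial.map_X] at this
  have h1K : 1 < Fintype.card K := Fintype.one_lt_card
  have hQ0 : ((X : K[X]) ^ q ^ m - X) ≠ 0 := by
    rw [← hK]; exact FiniteField.X_pow_card_sub_X_ne_zero K h1K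
  have hQsplits : Splits ((X : K[X]) ^ q ^ m - X) := by
    rw [splits_iff_card_roots, ← hK, FiniteField.roots_X_pow_card_sub_X,
      FiniteField.X_pow_card_sub_X_natDegree_eq K h1K]
    simp
  have hsplits : Splits (f.map (algebraMap F K)) :=
    Splits.of_dvd hQsplits hQ0 hdvdK
  have hsep : (f.map (algebraMap F K)).Separable :=
    (PerfectField.separable_of_irreducible hirr).map
  rw [Multiset.toFinset_card_of_nodup (nodup_roots hsep),
    splits_iff_card_roots.mp hsplits, natDegree_map, hdeg]

theorem MyAux.stepC {m : ℕ} (hm : 2 ≤ m) (hfin : finrank F K = m)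
    (hK : Fintype.card K = Fintype.card F ^ m) (g : F) (s h : ℕ) (a : F) :
    Nat.card {x : K // (minpoly F x).natDegree = m ∧ Algebra.trace F K x = a ∧
      ∃ k : ℕ, Algebra.norm F x = g ^ (h + s * k)} = m * PP F g m s h a := by
  have hm0 : 0 < m := by omega
  set T := {f : Polynomial F // f.Monic ∧ f.natDegree = m ∧ Irreducible f ∧
    f.coeff (m - 1) = -a ∧ ∃ k : ℕ, (-1 : F) ^ m * f.coeff 0 = g ^ (h + s * k)} with hT
  set Sm := {x : K // (minpoly F x).natDegree = m ∧ Algebra.trace F K x = a ∧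
      ∃ k : ℕ, Algebra.norm F x = g ^ (h + s * k)} with hSm
  have hπ : ∀ x : Sm, (minpoly F x.1).Monic ∧ (minpoly F x.1).natDegree = m ∧
      Irreducible (minpoly F x.1) ∧ (minpoly F x.1).coeff (m - 1) = -a ∧
      ∃ k : ℕ, (-1 : F) ^ m * (minpoly F x.1).coeff 0 = g ^ (h + s * k) := by
    intro x
    obtain ⟨hdeg, htr, hnorm⟩ := x.2
    have hint : IsIntegral F x.1 := IsIntegral.of_finite F x.1
    obtain ⟨h1, h2⟩ := MyAux.trace_norm_eq hm0 hfin x.1 hdeg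
    refine ⟨minpoly.monic hint, hdeg, minpoly.irreducible hint, ?_, ?_⟩
    · rw [h1] at htr; exact neg_eq_iff_eq_neg.mp htr
    · rw [← h2]; exact hnorm
  let π : Sm → T := fun x => ⟨minpoly F x.1, hπ x⟩
  have hfiber : ∀ f : T, Nat.card {y : Sm // π y = f} = m := by
    intro f
    obtain ⟨f, hmonic, hdeg, hirr, hca, hc0⟩ := f
    have hf0 : f ≠ 0 := hmonic.ne_zero
    have hfK0 : f.map (algebraMap F K) ≠ 0 :=
      (Polynomial.map_ne_zero_iff (algebraMap F K).injective).2 hf0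
    have hminx : ∀ x : K, x ∈ ((f.map (algebraMap F K)).roots).toFinset ↔
        minpoly F x = f := by
      intro x
      rw [Multiset.mem_toFinset, mem_roots hfK0, IsRoot.def, eval_map, ← aeval_def]
      constructor
      · intro hx; exact (minpoly.eq_of_irreducible_of_monic hirr hx hmonic).symm
      · intro hx; rw [← hx]; exact minpoly.aeval F x
    have e : {y : Sm // π y = ⟨f, hmonic, hdeg, hirr, hca, hc0⟩} ≃
        {x : K // x ∈ ((f.map (algebraMap F K)).roots).toFinset} := by
      refine ⟨fun y => ⟨y.1.1, (hminx _).2 (congrArg Subtype.val y.2)⟩,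
        fun z => ⟨⟨z.1, ?_⟩, ?_⟩, fun y => Subtype.ext (Subtype.ext rfl), fun z => rfl⟩
      · have hmin : minpoly F z.1 = f := (hminx _).1 z.2
        have hdeg' : (minpoly F z.1).natDegree = m := by rw [hmin, hdeg]
        obtain ⟨h1, h2⟩ := MyAux.trace_norm_eq hm0 hfin z.1 hdeg'
        refine ⟨hdeg', ?_, ?_⟩
        · rw [h1, hmin, hca, neg_neg]
        · obtain ⟨k, hk⟩ := hc0
          exact ⟨k, by rw [h2, hmin]; exact hk⟩
      · exact Subtype.ext ((hminx _).1 z.2)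
    rw [Nat.card_congr e, Nat.card_eq_fintype_card, Fintype.card_coe,
      MyAux.roots_card hK f hmonic hdeg hirr]
  have hsurj : Function.Surjective π := by
    intro f
    have hpos : 0 < Nat.card {y : Sm // π y = f} := by rw [hfiber f]; omega
    obtain ⟨y⟩ := (Nat.card_pos_iff.mp hpos).1
    exact ⟨y.1, y.2⟩
  haveI : Finite Sm := Subtype.finite
  haveI : Finite T := Finite.of_surjective π hsurj
  haveI : Fintype T := Fintype.ofFinite _
  haveI : Fintype Sm := Fintype.ofFinite _
  have hcount := Fintype.card_congr (Equiv.sigmaFiberEquiv π).symm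
  rw [Fintype.card_sigma] at hcount
  have hsum : ∀ f : T, Fintype.card {y : Sm // π y = f} = m := by
    intro f
    rw [← Nat.card_eq_fintype_card, hfiber f]
  have hPP : PP F g m s h a = Nat.card T := rfl
  rw [hPP, Nat.card_eq_fintype_card, Nat.card_eq_fintype_card]
  calc Fintype.card Sm = ∑ f : T, Fintype.card {y : Sm // π y = f} := hcount
    _ = ∑ _f : T, m := Finset.sum_congr rfl (fun f _ => hsum f)
    _ = Fintype.card T * m := by rw [Finset.sum_const, Finset.card_univ, smul_eq_mul]
    _ = m * Fintype.card T := Nat.mul_comm _ _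

theorem MyAux.card_partition {α : Type*} [Finite α] (t : Finset ℕ) (dg : α → ℕ)
    (hdg : ∀ x, dg x ∈ t) :
    Nat.card α = ∑ u ∈ t, Nat.card {x : α // dg x = u} := by
  haveI : Fintype α := Fintype.ofFinite _
  let σ : α → {u // u ∈ t} := fun x => ⟨dg x, hdg x⟩
  have h1 : Nat.card α = ∑ i : {u // u ∈ t}, Nat.card {x : α // σ x = i} := by
    rw [Nat.card_eq_fintype_card, Fintype.card_congr (Equiv.sigmaFiberEquiv σ).symm,
      Fintype.card_sigma]
    exact Finset.sum_congr rfl fun i _ => (Nat.card_eq_fintype_card).symm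
  rw [h1, ← Finset.sum_attach t (fun u => Nat.card {x : α // dg x = u}),
    Finset.univ_eq_attach]
  refine Finset.sum_congr rfl fun i _ => Nat.card_congr (Equiv.subtypeEquivRight fun x => ?_)
  constructor
  · intro hx; exact congrArg Subtype.val hx
  · intro hx; exact Subtype.ext hx

end Aux

/-- Möbius inversion formula `P_m(a,s,h) = (1/m)·Σ_{t ∣ m} μ(m/t)·N_t(a,s,h)`. -/
theorem stmt0 (p r m s h : ℕ) [Fact p.Prime] (hr : 0 < r) (hm : 2 ≤ m)
    (F K : Type*) [Field F] [Fintype F] [Field K] [Fintype K] [Algebra F K]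
    (hF : Fintype.card F = p ^ r) (hK : Fintype.card K = Fintype.card F ^ m)
    (g : Fˣ) (hg : ∀ u : Fˣ, u ∈ Subgroup.zpowers g)
    (hs : 0 < s) (hsq : s ∣ Fintype.card F - 1) (hh : h < s) (a : F) :
    (PP F (g : F) m s h a : ℚ) =
      (1 / m) * ∑ t ∈ m.divisors,
        (ArithmeticFunction.moebius (m / t) : ℚ) * (NN F K (g : F) s h t a : ℚ) := by
  have h1q : 1 < Fintype.card F := Fintype.one_lt_card
  have hm0 : 0 < m := by omega
  haveI : CharP F p := MyAux.charP_of_card p r hr hF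
  haveI : CharP K p := charP_of_injective_algebraMap (algebraMap F K).injective p
  have hfin : Module.finrank F K = m := by
    have hc := Module.card_eq_pow_finrank (K := F) (V := K)
    rw [hK] at hc
    exact Nat.pow_right_injective h1q hc.symm
  -- the counting function by exact degree
  set Mn : ℕ → ℕ := fun u => Nat.card {x : K // (minpoly F x).natDegree = u ∧
      Algebra.trace F K x = a ∧ ∃ k : ℕ, Algebra.norm F x = (g : F) ^ (h + s * k)} with hMn
  -- Step A : NN t = ∑_{u ∣ t} Mn u  for t ≠ 0
  have hstepA_nat : ∀ t : ℕ, t ≠ 0 → NN F K (g : F) s h t a = ∑ u ∈ t.divisors, Mn u := by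
    intro t ht0
    have h1 : NN F K (g : F) s h t a = Nat.card {x : K // (minpoly F x).natDegree ∣ t ∧
        Algebra.trace F K x = a ∧ ∃ k : ℕ, Algebra.norm F x = (g : F) ^ (h + s * k)} := by
      refine Nat.card_congr (Equiv.subtypeEquivRight fun x => ?_)
      rw [MyAux.key_iff p r hF t x]
    rw [h1, MyAux.card_partition t.divisors
      (fun x => (minpoly F x.1).natDegree)
      (fun x => Nat.mem_divisors.mpr ⟨x.2.1, ht0⟩)]
    refine Finset.sum_congr rfl (fun u hu => ?_)
    obtain ⟨hudvd, -⟩ := Nat.mem_divisors.mp hu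
    refine Nat.card_congr ⟨fun y => ⟨y.1.1, y.2, y.1.2.2⟩,
      fun z => ⟨⟨z.1, by rw [z.2.1]; exact hudvd, z.2.2⟩, z.2.1⟩, fun y => ?_, fun z => rfl⟩
    · apply Subtype.ext; apply Subtype.ext; rfl
  have hstepA : ∀ t ∈ m.divisors, (NN F K (g : F) s h t a : ℚ)
      = ∑ u ∈ t.divisors, (Mn u : ℚ) := by
    intro t htmem
    have ht0 : t ≠ 0 := fun h0 => by
      obtain ⟨htdvd, -⟩ := Nat.mem_divisors.mp htmem
      subst h0
      exact absurd (Nat.eq_zero_of_zero_dvd htdvd) (by omega)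
    rw [hstepA_nat t ht0]
    push_cast
    rfl
  -- Step B : Möbius inversion
  have hmob := (ArithmeticFunction.sum_eq_iff_sum_mul_moebius_eq
    (f := fun u => (Mn u : ℚ)) (g := fun n => ∑ u ∈ n.divisors, (Mn u : ℚ))).mp
    (fun n _ => rfl) m hm0
  rw [Nat.sum_divisorsAntidiagonal' (f := fun i j =>
    ((ArithmeticFunction.moebius i : ℤ) : ℚ) * ∑ u ∈ j.divisors, (Mn u : ℚ))] at hmob
  -- Step C
  have hstepC_nat : Mn m = m * PP F (g : F) m s h a :=
    MyAux.stepC hm hfin hK (g : F) s h a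
  have hstepC : (Mn m : ℚ) = m * PP F (g : F) m s h a := by
    rw [hstepC_nat]; push_cast; ring
  calc (PP F (g : F) m s h a : ℚ)
      = (1 / m) * (m * PP F (g : F) m s h a) := by
        field_simp
    _ = (1 / m) * ∑ t ∈ m.divisors,
        (ArithmeticFunction.moebius (m / t) : ℚ) * (NN F K (g : F) s h t a : ℚ) := by
        rw [← hstepC, ← hmob]
        congr 1
        refine Finset.sum_congr rfl (fun t ht => ?_)
        rw [hstepA t ht]

end
end

section
/- With the notation of the context: (i) if d ∤ h then N_t = 0; (ii) if p | (m/t) and a ≠ 0 then N_t = 0; (iii) if p | (m/t), d | h and a = 0 then N_t = (d/s)·(q^t − 1). -/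
noncomputable section

open Complex Polynomial Classical

open Finset in
private lemma auxGeom {q : ℕ} (hq : 1 ≤ q) (n : ℕ) :
    (q - 1) * ∑ i ∈ range n, q ^ i = q ^ n - 1 := by
  induction n with
  | zero => simp
  | succ n ih =>
    rw [Finset.sum_range_succ, Nat.mul_add, ih, pow_succ]
    have h1 : 1 ≤ q ^ n := Nat.one_le_pow _ _ hq
    have h2 : (q - 1) * q ^ n = q ^ n * q - q ^ n := by
      rw [Nat.sub_mul, one_mul, mul_comm]
    have h3 : q ^ n ≤ q ^ n * q := Nat.le_mul_of_pos_right _ hq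
    omega

open Finset in
private lemma auxInv {c n : ℕ} (hn : 0 < n) (h : Nat.Coprime c n) :
    ∃ w, c * w ≡ 1 [MOD n] := by
  refine ⟨c ^ (n.totient - 1), ?_⟩
  have h1 : c * c ^ (n.totient - 1) = c ^ n.totient := by
    rw [← pow_succ']
    congr 1
    have := Nat.totient_pos.mpr hn
    omega
  rw [h1]
  exact Nat.ModEq.pow_totient h

open Finset in
private lemma auxCountMod {n s' j1 : ℕ} (hs' : s' ∣ n) (hj1 : j1 < s') :
    ((range n).filter (fun j => j % s' = j1)).card = n / s' := by
  obtain ⟨e, rfl⟩ := hs'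
  have hs0 : 0 < s' := lt_of_le_of_lt (Nat.zero_le _) hj1
  rw [Nat.mul_div_cancel_left _ hs0]
  have himg : (range (s' * e)).filter (fun j => j % s' = j1)
      = (range e).image (fun k => s' * k + j1) := by
    ext j
    simp only [Finset.mem_filter, mem_range, Finset.mem_image]
    constructor
    · rintro ⟨hj, hmod⟩
      refine ⟨j / s', ?_, ?_⟩
      · exact Nat.div_lt_of_lt_mul (by rwa [mul_comm] at hj ⊢)
      · conv_rhs => rw [← Nat.div_add_mod j s', hmod]
    · rintro ⟨k, hk, rfl⟩
      constructor
      · calc s' * k + j1 < s' * k + s' := by omega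
          _ = s' * (k + 1) := by ring
          _ ≤ s' * e := Nat.mul_le_mul_left _ (by omega)
      · rw [Nat.mul_add_mod, Nat.mod_eq_of_lt hj1]
  rw [himg, Finset.card_image_of_injective _ (fun a b hab => by
    exact Nat.eq_of_mul_eq_mul_left hs0 (Nat.add_right_cancel hab)), Finset.card_range]

open Finset in
private lemma auxCongrSol {c s b : ℕ} (hs : 0 < s) (hb : Nat.gcd c s ∣ b) :
    ∃ j1 < s / Nat.gcd c s, ∀ j, (c * j ≡ b [MOD s] ↔ j % (s / Nat.gcd c s) = j1) := by
  set d := Nat.gcd c s with hd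
  have hd0 : 0 < d := Nat.gcd_pos_of_pos_right _ hs
  obtain ⟨c', hc'⟩ : d ∣ c := Nat.gcd_dvd_left _ _
  obtain ⟨s', hs'⟩ : d ∣ s := Nat.gcd_dvd_right _ _
  obtain ⟨b', hb'⟩ := hb
  have hsd : s / d = s' := by rw [hs', Nat.mul_div_cancel_left _ hd0]
  have hs'0 : 0 < s' := by
    rcases Nat.eq_zero_or_pos s' with h | h
    · exfalso; rw [h, Nat.mul_zero] at hs'; omega
    · exact h
  have hcop : Nat.Coprime c' s' := by
    have h1 : d * Nat.gcd c' s' = d * 1 := by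
      rw [Nat.mul_one, ← Nat.gcd_mul_left, ← hc', ← hs']
    exact Nat.eq_of_mul_eq_mul_left hd0 h1
  obtain ⟨w, hw⟩ := auxInv hs'0 hcop
  refine ⟨(w * b') % s', by rw [hsd]; exact Nat.mod_lt _ hs'0, fun j => ?_⟩
  rw [hsd]
  constructor
  · intro h
    have h1 : d * (c' * j) ≡ d * b' [MOD d * s'] := by
      rw [← Nat.mul_assoc, ← hc', ← hb', ← hs']; exact h
    have h2 : c' * j ≡ b' [MOD s'] := Nat.ModEq.mul_left_cancel' (by omega) h1
    have h3 : w * (c' * j) ≡ w * b' [MOD s'] := h2.mul_left w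
    have h4 : c' * w * j ≡ 1 * j [MOD s'] := hw.mul_right j
    have h5 : j ≡ w * b' [MOD s'] := by
      calc j = 1 * j := (one_mul j).symm
        _ ≡ c' * w * j [MOD s'] := h4.symm
        _ = w * (c' * j) := by ring
        _ ≡ w * b' [MOD s'] := h3
    simpa [Nat.ModEq] using h5
  · intro h
    have h5 : j ≡ w * b' [MOD s'] := by simpa [Nat.ModEq] using h
    have h6 : c' * j ≡ c' * (w * b') [MOD s'] := h5.mul_left c'
    have h7 : c' * (w * b') ≡ b' [MOD s'] := by
      calc c' * (w * b') = c' * w * b' := by ring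
        _ ≡ 1 * b' [MOD s'] := hw.mul_right b'
        _ = b' := one_mul b'
    have h8 : c' * j ≡ b' [MOD s'] := h6.trans h7
    have h9 : d * (c' * j) ≡ d * b' [MOD d * s'] := h8.mul_left' d
    rw [← Nat.mul_assoc, ← hc', ← hb', ← hs'] at h9
    exact h9

open Finset in
private lemma auxCountCongr {c s b n : ℕ} (hs : 0 < s) (hb : Nat.gcd c s ∣ b) (hn : s ∣ n) :
    ((range n).filter (fun j => c * j ≡ b [MOD s])).card = n / (s / Nat.gcd c s) := by
  obtain ⟨j1, hj1, hiff⟩ := auxCongrSol hs hb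
  have heq : (range n).filter (fun j => c * j ≡ b [MOD s])
      = (range n).filter (fun j => j % (s / Nat.gcd c s) = j1) := by
    apply Finset.filter_congr
    intro j _
    simpa using hiff j
  rw [heq, auxCountMod (dvd_trans (Nat.div_dvd_of_dvd (Nat.gcd_dvd_right _ _)) hn) hj1]

open Finset in
private lemma auxExistsK {D w h s Nq : ℕ} (hs : 0 < s) (hsN : s ∣ Nq) (hNq : 0 < Nq)
    (hw : Nat.Coprime w Nq) :
    (∃ k, D ≡ w * (h + s * k) [MOD Nq]) ↔ D ≡ w * h [MOD s] := by
  obtain ⟨n', hn'⟩ := hsN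
  have hn'0 : 0 < n' := by
    rcases Nat.eq_zero_or_pos n' with h' | h'
    · exfalso; rw [h', Nat.mul_zero] at hn'; omega
    · exact h'
  constructor
  · rintro ⟨k, hk⟩
    have h1 : D ≡ w * (h + s * k) [MOD s] := Nat.ModEq.of_dvd ⟨n', hn'⟩ hk
    have h2 : w * (h + s * k) ≡ w * h + 0 [MOD s] := by
      have he : w * (h + s * k) = w * h + s * (w * k) := by ring
      rw [he]
      exact Nat.ModEq.add_left _ ((Nat.modEq_zero_iff_dvd).mpr ⟨w * k, by ring⟩)
    simpa using h1.trans h2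
  · intro hmod
    have hwn' : Nat.Coprime w n' := hw.coprime_dvd_right ⟨s, by rw [hn']; ring⟩
    obtain ⟨w', hww'⟩ := auxInv hn'0 hwn'
    obtain ⟨e, he⟩ : (s : ℤ) ∣ ((w * h : ℕ) : ℤ) - (D : ℤ) := by
      have := (Nat.modEq_iff_dvd).mp hmod
      exact_mod_cast this
    set k : ℕ := ((-e) * (w' : ℤ) % (n' : ℤ)).toNat with hkdef
    have hn'z : (0:ℤ) < (n' : ℤ) := by exact_mod_cast hn'0
    have hknn : (0:ℤ) ≤ (-e) * (w' : ℤ) % (n' : ℤ) := Int.emod_nonneg _ (by omega)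
    have hkz : (k : ℤ) = (-e) * (w' : ℤ) % (n' : ℤ) := Int.toNat_of_nonneg hknn
    refine ⟨k, ?_⟩
    rw [Nat.modEq_iff_dvd]
    have h1 : ((w : ℤ) * k) ≡ (w : ℤ) * ((-e) * w') [ZMOD (n' : ℤ)] := by
      apply Int.ModEq.mul_left
      rw [hkz]
      exact Int.emod_emod_of_dvd _ dvd_rfl
    have h2 : ((w : ℤ) * w') ≡ 1 [ZMOD (n' : ℤ)] := by
      have := Int.natCast_modEq_iff.mpr hww'
      exact_mod_cast this
    have h3 : ((w : ℤ) * k) ≡ -e [ZMOD (n' : ℤ)] := by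
      calc ((w : ℤ) * k) ≡ (w : ℤ) * ((-e) * w') [ZMOD (n' : ℤ)] := h1
        _ = ((w : ℤ) * w') * (-e) := by ring
        _ ≡ 1 * (-e) [ZMOD (n' : ℤ)] := h2.mul_right _
        _ = -e := one_mul _
    have h4 : (n' : ℤ) ∣ (e + (w : ℤ) * k) := by
      have h5 : (n' : ℤ) ∣ (-e - (w:ℤ) * k) := h3.dvd
      have h6 : (e + (w:ℤ) * k) = -(-e - (w:ℤ)*k) := by ring
      rw [h6]
      exact h5.neg_right
    have hNqz : (Nq : ℤ) = (s : ℤ) * (n' : ℤ) := by exact_mod_cast hn'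
    have hrw : ((w * (h + s * k) : ℕ) : ℤ) - (D : ℤ) = (s : ℤ) * (e + (w:ℤ) * k) := by
      push_cast at he ⊢
      linear_combination he
    rw [hrw, hNqz]
    exact mul_dvd_mul_left _ h4

open Finset in
private lemma auxSumModEq {M : ℕ} (n : ℕ) (f g : ℕ → ℕ) (h : ∀ j, f j ≡ g j [MOD M]) :
    ∑ j ∈ range n, f j ≡ ∑ j ∈ range n, g j [MOD M] := by
  induction n with
  | zero => rfl
  | succ n ih => rw [Finset.sum_range_succ, Finset.sum_range_succ]; exact ih.add (h n)

open Finset in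
private lemma auxSumPeriodic {M : Type*} [AddCommMonoid M] (f : ℕ → M) (t : ℕ)
    (hf : ∀ i, f (t + i) = f i) (n : ℕ) :
    ∑ i ∈ range (t * n), f i = n • ∑ i ∈ range t, f i := by
  have hshift : ∀ j i, f (t * j + i) = f i := by
    intro j
    induction j with
    | zero => simp
    | succ j ih =>
      intro i
      have he : t * (j + 1) + i = t + (t * j + i) := by ring
      rw [he, hf, ih]
  induction n with
  | zero => simp
  | succ n ih =>
    rw [Nat.mul_add, Nat.mul_one, Finset.sum_range_add, ih, succ_nsmul]
    congr 1
    exact Finset.sum_congr rfl fun i _ => hshift n i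

private lemma auxFrobAlg (F K : Type*) [Field F] [Fintype F] [Field K] [Fintype K]
    [Algebra F K] :
    ∃ φ : K ≃ₐ[F] K, ∀ (i : ℕ) (x : K), (φ ^ i) x = x ^ (Fintype.card F) ^ i := by
  have hadd : ∀ x y : K, (x + y) ^ (Fintype.card F)
      = x ^ Fintype.card F + y ^ Fintype.card F := by
    set p0 := ringChar F with hp0def
    haveI : CharP F p0 := ringChar.charP F
    have hp0 : p0.Prime := CharP.char_is_prime F p0
    haveI : Fact p0.Prime := ⟨hp0⟩
    haveI : CharP K p0 := charP_of_injective_algebraMap (algebraMap F K).injective p0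
    obtain ⟨n, -, hn⟩ := FiniteField.card F p0
    intro x y
    rw [hn]
    exact add_pow_char_pow x y p0 n
  let fr : K →ₐ[F] K :=
    { toFun := fun x => x ^ (Fintype.card F)
      map_one' := one_pow _
      map_mul' := fun x y => mul_pow x y _
      map_zero' := zero_pow (Fintype.card_pos).ne'
      map_add' := hadd
      commutes' := fun a => by
        show (algebraMap F K a) ^ Fintype.card F = algebraMap F K a
        rw [← map_pow, FiniteField.pow_card] }
  have hinj : Function.Injective fr := fr.toRingHom.injective
  have hbij := (Finite.injective_iff_bijective).mp hinj
  refine ⟨AlgEquiv.ofBijective fr hbij, ?_⟩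
  intro i
  induction i with
  | zero => intro x; simp
  | succ i ih =>
    intro x
    rw [pow_succ, AlgEquiv.mul_apply, ih]
    show ((x ^ Fintype.card F) : K) ^ (Fintype.card F) ^ i = _
    rw [← pow_mul, pow_succ', pow_mul]

open Finset in
private lemma auxNormTrace (F K : Type*) [Field F] [Fintype F] [Field K] [Fintype K]
    [Algebra F K] (m : ℕ) (hm : 2 ≤ m) (hK : Fintype.card K = Fintype.card F ^ m) :
    (∀ x : K, algebraMap F K (Algebra.norm F x)
        = x ^ (∑ i ∈ range m, (Fintype.card F) ^ i)) ∧
    (∀ x : K, algebraMap F K (Algebra.trace F K x)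
        = ∑ i ∈ range m, x ^ (Fintype.card F) ^ i) := by
  classical
  set q := Fintype.card F with hq
  have hq2 : 2 ≤ q := Fintype.one_lt_card
  have hfr : Module.finrank F K = m := by
    have h1 : Fintype.card K = q ^ Module.finrank F K := Module.card_eq_pow_finrank
    exact Nat.pow_right_injective hq2
      (show q ^ Module.finrank F K = q ^ m by rw [← h1, hK])
  obtain ⟨φ, hφ⟩ := auxFrobAlg F K
  obtain ⟨G, hG⟩ := IsCyclic.exists_generator (α := Kˣ)
  have hordG : orderOf G = q ^ m - 1 := by
    rw [orderOf_eq_card_of_forall_mem_zpowers hG, Nat.card_eq_fintype_card,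
      Fintype.card_units, hK]
  have hinj : Function.Injective (fun i : Fin m => φ ^ (i : ℕ)) := by
    intro i j hij
    have h1 : (G : K) ^ q ^ (i : ℕ) = (G : K) ^ q ^ (j : ℕ) := by
      have := congrArg (fun σ : K ≃ₐ[F] K => σ (G : K)) hij
      simpa [hφ] using this
    have h2 : G ^ q ^ (i : ℕ) = G ^ q ^ (j : ℕ) := by
      ext
      simpa [Units.val_pow_eq_pow_val] using h1
    have h3 : q ^ (i : ℕ) ≡ q ^ (j : ℕ) [MOD q ^ m - 1] :=
      hordG ▸ (pow_eq_pow_iff_modEq).mp h2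
    have hlt : ∀ i0 : Fin m, q ^ (i0 : ℕ) < q ^ m - 1 := by
      intro i0
      have h4 : q ^ (i0 : ℕ) ≤ q ^ (m - 1) :=
        Nat.pow_le_pow_right (by omega) (by omega)
      have h5 : q ^ (m - 1) * 2 ≤ q ^ (m - 1) * q := Nat.mul_le_mul_left _ hq2
      have h6 : q ^ (m - 1) * q = q ^ m := by
        rw [← pow_succ, Nat.sub_add_cancel (by omega)]
      have h7 : 1 ≤ q ^ (m - 1) := Nat.one_le_pow _ _ (by omega)
      have h8 : q ≤ q ^ (m - 1) := Nat.le_self_pow (by omega) q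
      omega
    have h8 : q ^ (i : ℕ) = q ^ (j : ℕ) := h3.eq_of_lt_of_lt (hlt i) (hlt j)
    have h9 : (i : ℕ) = (j : ℕ) := Nat.pow_right_injective hq2 h8
    exact Fin.ext h9
  have hbij : Function.Bijective (fun i : Fin m => φ ^ (i : ℕ)) := by
    rw [Fintype.bijective_iff_injective_and_card]
    refine ⟨hinj, ?_⟩
    rw [Fintype.card_fin, ← Nat.card_eq_fintype_card, IsGalois.card_aut_eq_finrank, hfr]
  constructor
  · intro x
    rw [Algebra.norm_eq_prod_automorphisms]
    rw [← Fintype.prod_bijective _ hbij (fun i => x ^ q ^ (i : ℕ)) _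
      (fun i => (hφ (i : ℕ) x).symm)]
    rw [Fin.prod_univ_eq_prod_range (fun i => x ^ q ^ i) m]
    rw [Finset.prod_pow_eq_pow_sum]
  · intro x
    rw [trace_eq_sum_automorphisms]
    rw [← Fintype.sum_bijective _ hbij (fun i => x ^ q ^ (i : ℕ)) _
      (fun i => (hφ (i : ℕ) x).symm)]
    rw [Fin.sum_univ_eq_sum_range (fun i => x ^ q ^ i) m]

/-- (i) if `d ∤ h` then `N_t = 0`; (ii) if `p ∣ m/t` and `a ≠ 0` then `N_t = 0`;
(iii) if `p ∣ m/t`, `d ∣ h` and `a = 0` then `N_t = (d/s)·(q^t − 1)`. -/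
theorem stmt1 (p r m s h t d : ℕ) [Fact p.Prime] (hr : 0 < r) (hm : 2 ≤ m)
    (ht : t ∣ m) (ht0 : 0 < t)
    (F K : Type*) [Field F] [Fintype F] [Field K] [Fintype K] [Algebra F K]
    (hF : Fintype.card F = p ^ r) (hK : Fintype.card K = Fintype.card F ^ m)
    (g : Fˣ) (hg : ∀ u : Fˣ, u ∈ Subgroup.zpowers g)
    (hs : 0 < s) (hsq : s ∣ Fintype.card F - 1) (hh : h < s)
    (hd : d = Nat.gcd (m / t) s) (a : F) :
    (¬ d ∣ h → NN F K (g : F) s h t a = 0) ∧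
    (p ∣ m / t → a ≠ 0 → NN F K (g : F) s h t a = 0) ∧
    (p ∣ m / t → d ∣ h → a = 0 →
      (NN F K (g : F) s h t a : ℚ) =
        ((d : ℚ) / (s : ℚ)) * ((Fintype.card F : ℚ) ^ t - 1)) := by
  classical
  set q := Fintype.card F with hq
  have hq2 : 2 ≤ q := Fintype.one_lt_card
  have hq1pos : 0 < q - 1 := by omega
  obtain ⟨hnorm, htrace⟩ := auxNormTrace F K m hm hK
  have hmt : t * (m / t) = m := Nat.mul_div_cancel' ht
  have hmtpos : 0 < m / t := Nat.div_pos (Nat.le_of_dvd (by omega) ht) ht0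
  set Sm := ∑ i ∈ Finset.range m, q ^ i with hSm
  set St := ∑ i ∈ Finset.range t, q ^ i with hSt
  set Ct := ∑ j ∈ Finset.range (m / t), (q ^ t) ^ j with hCt
  have hSmpos : 0 < Sm :=
    Finset.sum_pos (fun i _ => pow_pos (by omega) i)
      ⟨0, Finset.mem_range.mpr (by omega)⟩
  have hCtpos : 0 < Ct :=
    Finset.sum_pos (fun i _ => pow_pos (pow_pos (by omega) t) i)
      ⟨0, Finset.mem_range.mpr (by omega)⟩
  have hGeomSm : (q - 1) * Sm = q ^ m - 1 := auxGeom (by omega) m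
  have hGeomCt : (q ^ t - 1) * Ct = q ^ m - 1 := by
    have h0 := auxGeom (q := q ^ t) (Nat.one_le_pow _ _ (by omega)) (m / t)
    rwa [← pow_mul, hmt] at h0
  have hqt2 : 2 ≤ q ^ t := le_trans hq2 (Nat.le_self_pow (by omega) q)
  have hqt1 : 0 < q ^ t - 1 := by omega
  have hqm2 : 2 ≤ q ^ m := le_trans hq2 (Nat.le_self_pow (by omega) q)
  have hQpos : 0 < q ^ m - 1 := by omega
  have hq1qt : q - 1 ∣ q ^ t - 1 := by
    have h0 := Nat.sub_dvd_pow_sub_pow q 1 t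
    rwa [one_pow] at h0
  -- generator of Kˣ
  obtain ⟨G, hG⟩ := IsCyclic.exists_generator (α := Kˣ)
  have hordG : orderOf G = q ^ m - 1 := by
    rw [orderOf_eq_card_of_forall_mem_zpowers hG, Nat.card_eq_fintype_card,
      Fintype.card_units, hK]
  -- embed g into Kˣ
  set ι : Fˣ →* Kˣ := Units.map (algebraMap F K : F →+* K) with hι
  have hιinj : Function.Injective ι := Units.map_injective (algebraMap F K).injective
  have hordg : orderOf g = q - 1 := by
    rw [orderOf_eq_card_of_forall_mem_zpowers hg, Nat.card_eq_fintype_card,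
      Fintype.card_units]
  obtain ⟨c, hc0⟩ := (mem_powers_iff_mem_zpowers).mpr (hG (ι g))
  have hc : G ^ c = ι g := hc0
  have hordc : orderOf (G ^ c) = q - 1 := by
    rw [hc, orderOf_injective ι hιinj, hordg]
  have hgcdSm : Nat.gcd (q ^ m - 1) c = Sm := by
    rw [orderOf_pow, hordG] at hordc
    have hdvd : Nat.gcd (q ^ m - 1) c ∣ q ^ m - 1 := Nat.gcd_dvd_left _ _
    have h1 : Nat.gcd (q ^ m - 1) c * (q - 1) = q ^ m - 1 := by
      conv_rhs => rw [← Nat.mul_div_cancel' hdvd]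
      rw [hordc]
    have h2 : Nat.gcd (q ^ m - 1) c * (q - 1) = Sm * (q - 1) := by
      rw [h1, ← hGeomSm]; ring
    exact Nat.eq_of_mul_eq_mul_right hq1pos h2
  obtain ⟨w, hwdef⟩ : Sm ∣ c := hgcdSm ▸ Nat.gcd_dvd_right (q ^ m - 1) c
  have hwcop : Nat.Coprime w (q - 1) := by
    have h1 : Sm * Nat.gcd (q - 1) w = Sm * 1 := by
      rw [← Nat.gcd_mul_left, Nat.mul_one, ← hwdef, mul_comm, hGeomSm, hgcdSm]
    exact Nat.coprime_comm.mp (Nat.eq_of_mul_eq_mul_left hSmpos h1)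
  -- Ct mod q-1
  have hCtmod : Ct ≡ m / t [MOD q - 1] := by
    have h1 : ∀ j : ℕ, (q ^ t) ^ j ≡ 1 [MOD q - 1] := by
      intro j
      have h2 : q - 1 ∣ (q ^ t) ^ j - 1 := by
        have h3 := Nat.sub_dvd_pow_sub_pow q 1 (t * j)
        rw [one_pow, pow_mul] at h3
        exact h3
      exact ((Nat.modEq_iff_dvd' (Nat.one_le_pow _ _ (by omega))).mpr h2).symm
    calc Ct ≡ ∑ j ∈ Finset.range (m / t), 1 [MOD q - 1] :=
          auxSumModEq (m / t) _ _ h1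
      _ = m / t := by simp
  -- the key pointwise equivalence
  have key : ∀ i : ℕ,
      ((((G ^ i : Kˣ) : K)) ^ q ^ t = ((G ^ i : Kˣ) : K) ∧
        ∃ k, Algebra.norm F (((G ^ i : Kˣ) : K)) = (g : F) ^ (h + s * k)) ↔
      (Ct ∣ i ∧ ∃ k, i ≡ w * (h + s * k) [MOD q - 1]) := by
    intro i
    apply and_congr
    · constructor
      · intro hx
        have h1 : (G ^ i) ^ q ^ t = G ^ i := Units.ext (by
          rwa [Units.val_pow_eq_pow_val])
        have h2 : G ^ (i * q ^ t) = G ^ i := by rwa [pow_mul]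
        have h3 : i * q ^ t ≡ i [MOD q ^ m - 1] := by
          rw [← hordG]; exact (pow_eq_pow_iff_modEq).mp h2
        have h4 : (q ^ m - 1) ∣ i * q ^ t - i :=
          (Nat.modEq_iff_dvd' (Nat.le_mul_of_pos_right i
            (show 0 < q ^ t by omega))).mp h3.symm
        have h5 : i * q ^ t - i = i * (q ^ t - 1) := (Nat.mul_sub_one i (q ^ t)).symm
        rw [h5, ← hGeomCt, mul_comm (q ^ t - 1) Ct] at h4
        exact (Nat.mul_dvd_mul_iff_right hqt1).mp h4
      · rintro ⟨j, rfl⟩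
        have h2 : G ^ (Ct * j * q ^ t) = G ^ (Ct * j) := by
          apply (pow_eq_pow_iff_modEq).mpr
          rw [hordG]
          refine ((Nat.modEq_iff_dvd'
            (Nat.le_mul_of_pos_right _ (show 0 < q ^ t by omega))).mpr ?_).symm
          have h5 : Ct * j * q ^ t - Ct * j = Ct * j * (q ^ t - 1) :=
            (Nat.mul_sub_one _ _).symm
          rw [h5, ← hGeomCt]
          exact ⟨j, by ring⟩
        calc ((G ^ (Ct * j) : Kˣ) : K) ^ q ^ t
            = ((((G ^ (Ct * j)) ^ q ^ t : Kˣ)) : K) :=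
              (Units.val_pow_eq_pow_val _ _).symm
          _ = ((G ^ (Ct * j * q ^ t) : Kˣ) : K) := by rw [← pow_mul]
          _ = ((G ^ (Ct * j) : Kˣ) : K) := by rw [h2]
    · apply exists_congr; intro k
      have hcastg : algebraMap F K ((g : F) ^ (h + s * k))
          = ((ι g ^ (h + s * k) : Kˣ) : K) := by
        rw [map_pow]
        congr 1
      constructor
      · intro hnx
        have h1 : ((G ^ i : Kˣ) : K) ^ Sm = algebraMap F K ((g : F) ^ (h + s * k)) := by
          rw [← hnorm, hnx]
        rw [hcastg, ← hc, ← Units.val_pow_eq_pow_val] at h1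
        have h3 : (G ^ i) ^ Sm = (G ^ c) ^ (h + s * k) := Units.ext h1
        rw [← pow_mul, ← pow_mul] at h3
        have h4 : i * Sm ≡ c * (h + s * k) [MOD q ^ m - 1] :=
          hordG ▸ (pow_eq_pow_iff_modEq).mp h3
        rw [hwdef] at h4
        have h6 : Sm * w * (h + s * k) = w * (h + s * k) * Sm := by ring
        rw [h6, ← hGeomSm] at h4
        exact Nat.ModEq.mul_right_cancel' (by omega) h4
      · intro hmodi
        have h5 : i * Sm ≡ w * (h + s * k) * Sm [MOD (q - 1) * Sm] :=
          Nat.ModEq.mul_right' Sm hmodi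
        rw [hGeomSm] at h5
        have h3 : (G ^ i) ^ Sm = (G ^ c) ^ (h + s * k) := by
          rw [← pow_mul, ← pow_mul]
          apply (pow_eq_pow_iff_modEq).mpr
          rw [hordG, hwdef]
          have h6 : Sm * w * (h + s * k) = w * (h + s * k) * Sm := by ring
          rw [h6]
          exact h5
        apply (algebraMap F K).injective
        rw [hnorm, hcastg, ← hc, ← Units.val_pow_eq_pow_val]
        exact congrArg _ h3
  -- trace vanishes on the subfield when p ∣ m/t
  haveI hcharF : CharP F p := by
    haveI := ringChar.charP F
    obtain ⟨n0, hp0, hcard⟩ := FiniteField.card F (ringChar F)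
    have h1 : p ∣ ringChar F ^ (n0 : ℕ) := by
      rw [← hcard, ← hq, hF]
      exact dvd_pow_self p (by omega)
    have h2 : p ∣ ringChar F := (Fact.out : p.Prime).dvd_of_dvd_pow h1
    have h3 : ringChar F = p :=
      ((Nat.prime_dvd_prime_iff_eq (Fact.out : p.Prime) hp0).mp h2).symm
    rw [← h3]
    exact ringChar.charP F
  haveI hcharK : CharP K p := charP_of_injective_algebraMap (algebraMap F K).injective p
  have htr0 : ∀ x : K, x ^ q ^ t = x → p ∣ m / t → Algebra.trace F K x = 0 := by
    intro x hx hp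
    apply (algebraMap F K).injective
    rw [htrace, map_zero]
    have hper : ∀ i, x ^ q ^ (t + i) = x ^ q ^ i := by
      intro i
      rw [pow_add, pow_mul, hx]
    have hdecomp := auxSumPeriodic (fun i => x ^ q ^ i) t hper (m / t)
    rw [← hmt, hdecomp, nsmul_eq_mul]
    have h0 : ((m / t : ℕ) : K) = 0 := (CharP.cast_eq_zero_iff K p _).mpr hp
    rw [h0, zero_mul]
  refine ⟨?_, ?_, ?_⟩
  · -- part (i)
    intro hdh
    have hempty : IsEmpty {x : K // x ^ (Fintype.card F) ^ t = x ∧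
        Algebra.trace F K x = a ∧
        ∃ k : ℕ, Algebra.norm F x = (g : F) ^ (h + s * k)} := by
      refine ⟨fun y => hdh ?_⟩
      obtain ⟨x, hx1, hx2, hx3⟩ := y
      rw [← hq] at hx1
      have hx0 : x ≠ 0 := by
        rintro rfl
        obtain ⟨k, hk⟩ := hx3
        rw [Algebra.norm_zero] at hk
        exact (pow_ne_zero _ (Units.ne_zero g)) hk.symm
      obtain ⟨i0, hi00⟩ := (mem_powers_iff_mem_zpowers).mpr (hG (Units.mk0 x hx0))
      have hi0 : G ^ i0 = Units.mk0 x hx0 := hi00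
      set i := i0 % (q ^ m - 1) with hidef
      have hGi : ((G ^ i : Kˣ) : K) = x := by
        have h1 : G ^ i = G ^ i0 := by
          apply (pow_eq_pow_iff_modEq).mpr
          rw [hordG]
          exact Nat.mod_modEq _ _
        rw [h1, hi0]
        rfl
      have hkey := (key i).mp (by rw [hGi]; exact ⟨hx1, hx3⟩)
      obtain ⟨⟨j, hj⟩, k, hk⟩ := hkey
      have h1 : (m / t) * j ≡ w * (h + s * k) [MOD q - 1] := by
        calc (m / t) * j ≡ Ct * j [MOD q - 1] := (hCtmod.symm).mul_right j
          _ = i := hj.symm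
          _ ≡ w * (h + s * k) [MOD q - 1] := hk
      have h2 : (m / t) * j ≡ w * h [MOD s] :=
        (auxExistsK hs hsq (by omega) hwcop).mp ⟨k, h1⟩
      have hds : d ∣ s := hd ▸ Nat.gcd_dvd_right _ _
      have h3 : (m / t) * j ≡ w * h [MOD d] := Nat.ModEq.of_dvd hds h2
      have h5 : d ∣ (m / t) * j := Dvd.dvd.mul_right (hd ▸ Nat.gcd_dvd_left _ _) j
      have h4 : d ∣ w * h :=
        (Nat.modEq_zero_iff_dvd).mp (h3.symm.trans ((Nat.modEq_zero_iff_dvd).mpr h5))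
      have hdq : d ∣ q - 1 := hds.trans hsq
      have hcop2 : Nat.Coprime d w := (hwcop.coprime_dvd_right hdq).symm
      exact hcop2.dvd_of_dvd_mul_left h4
    simp only [NN]
    exact @Nat.card_of_isEmpty _ hempty
  · -- part (ii)
    intro hp ha
    have hempty : IsEmpty {x : K // x ^ (Fintype.card F) ^ t = x ∧
        Algebra.trace F K x = a ∧
        ∃ k : ℕ, Algebra.norm F x = (g : F) ^ (h + s * k)} := by
      refine ⟨fun y => ?_⟩
      obtain ⟨x, hx1, hx2, hx3⟩ := y
      rw [← hq] at hx1
      exact ha (hx2.symm.trans (htr0 x hx1 hp))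
    simp only [NN]
    exact @Nat.card_of_isEmpty _ hempty
  · -- part (iii)
    intro hp hdvdh ha
    subst ha
    have hds : d ∣ s := hd ▸ Nat.gcd_dvd_right _ _
    have hd0 : 0 < d := hd ▸ Nat.gcd_pos_of_pos_right _ hs
    have hsd0 : 0 < s / d := Nat.div_pos (Nat.le_of_dvd hs hds) hd0
    have hsqt : s ∣ q ^ t - 1 := hsq.trans hq1qt
    have hsdqt : s / d ∣ q ^ t - 1 := (Nat.div_dvd_of_dvd hds).trans hsqt
    have hNN : NN F K (g : F) s h t 0
        = ((Finset.range (q ^ m - 1)).filter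
            (fun i => Ct ∣ i ∧ ∃ k, i ≡ w * (h + s * k) [MOD q - 1])).card := by
      simp only [NN]
      rw [Nat.card_eq_fintype_card, Fintype.card_subtype]
      refine (Finset.card_bij (fun i _ => ((G ^ i : Kˣ) : K)) ?_ ?_ ?_).symm
      · intro i hi
        simp only [Finset.mem_filter, Finset.mem_range] at hi
        obtain ⟨hilt, hc1, hc2⟩ := hi
        obtain ⟨hA, hB⟩ := (key i).mpr ⟨hc1, hc2⟩
        simp only [Finset.mem_filter, Finset.mem_univ, true_and]
        exact ⟨hA, htr0 _ hA hp, hB⟩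
      · intro i1 h1 i2 h2 heq
        simp only [Finset.mem_filter, Finset.mem_range] at h1 h2
        have heq2 : G ^ i1 = G ^ i2 := Units.ext heq
        have h3 := (pow_eq_pow_iff_modEq).mp heq2
        rw [hordG] at h3
        exact h3.eq_of_lt_of_lt h1.1 h2.1
      · intro x hx
        simp only [Finset.mem_filter, Finset.mem_univ, true_and] at hx
        obtain ⟨hx1, hx2, hx3⟩ := hx
        have hx0 : x ≠ 0 := by
          rintro rfl
          obtain ⟨k, hk⟩ := hx3
          rw [Algebra.norm_zero] at hk
          exact (pow_ne_zero _ (Units.ne_zero g)) hk.symm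
        obtain ⟨i0, hi00⟩ := (mem_powers_iff_mem_zpowers).mpr (hG (Units.mk0 x hx0))
        have hi0 : G ^ i0 = Units.mk0 x hx0 := hi00
        have hGi : ((G ^ (i0 % (q ^ m - 1)) : Kˣ) : K) = x := by
          have h1 : G ^ (i0 % (q ^ m - 1)) = G ^ i0 := by
            apply (pow_eq_pow_iff_modEq).mpr
            rw [hordG]
            exact Nat.mod_modEq _ _
          rw [h1, hi0]
          rfl
        refine ⟨i0 % (q ^ m - 1), ?_, hGi⟩
        simp only [Finset.mem_filter, Finset.mem_range]
        exact ⟨Nat.mod_lt _ (by omega),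
          (key _).mp (by rw [hGi]; exact ⟨hx1, hx3⟩)⟩
    have himg : (Finset.range (q ^ m - 1)).filter
          (fun i => Ct ∣ i ∧ ∃ k, i ≡ w * (h + s * k) [MOD q - 1])
        = ((Finset.range (q ^ t - 1)).filter
            (fun j => (m / t) * j ≡ w * h [MOD s])).image (fun j => Ct * j) := by
      ext i
      simp only [Finset.mem_filter, Finset.mem_range, Finset.mem_image]
      constructor
      · rintro ⟨hilt, ⟨j, rfl⟩, hex⟩
        refine ⟨j, ⟨?_, ?_⟩, rfl⟩
        · by_contra hcon
          push_neg at hcon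
          have hle : (q ^ t - 1) * Ct ≤ Ct * j := by
            calc (q ^ t - 1) * Ct = Ct * (q ^ t - 1) := mul_comm _ _
              _ ≤ Ct * j := Nat.mul_le_mul_left _ hcon
          omega
        · obtain ⟨k, hk⟩ := hex
          refine (auxExistsK hs hsq (by omega) hwcop).mp ⟨k, ?_⟩
          calc (m / t) * j ≡ Ct * j [MOD q - 1] := hCtmod.symm.mul_right j
            _ ≡ w * (h + s * k) [MOD q - 1] := hk
      · rintro ⟨j, ⟨hjlt, hcong⟩, rfl⟩
        obtain ⟨k, hk⟩ := (auxExistsK hs hsq (by omega) hwcop).mpr hcong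
        refine ⟨?_, ⟨j, rfl⟩, ⟨k, ?_⟩⟩
        · calc Ct * j < Ct * (q ^ t - 1) := by
                exact Nat.mul_lt_mul_of_le_of_lt (le_refl Ct) hjlt hCtpos
            _ = q ^ m - 1 := by rw [mul_comm]; exact hGeomCt
        · calc Ct * j ≡ (m / t) * j [MOD q - 1] := hCtmod.mul_right j
            _ ≡ w * (h + s * k) [MOD q - 1] := hk
    have hcount : ((Finset.range (q ^ t - 1)).filter
        (fun j => (m / t) * j ≡ w * h [MOD s])).card = (q ^ t - 1) / (s / d) := by
      rw [auxCountCongr hs (by rw [← hd]; exact hdvdh.mul_left w) hsqt, ← hd]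
    rw [hNN, himg, Finset.card_image_of_injOn
      (fun a1 _ b1 _ hab => Nat.eq_of_mul_eq_mul_left hCtpos hab), hcount]
    have hsQ : (s : ℚ) ≠ 0 := by exact_mod_cast hs.ne'
    have hdQ : (d : ℚ) ≠ 0 := by exact_mod_cast hd0.ne'
    have hsdQ : ((s / d : ℕ) : ℚ) ≠ 0 := by exact_mod_cast hsd0.ne'
    rw [Nat.cast_div hsdqt hsdQ, Nat.cast_div hds hdQ]
    have hcast1 : ((q ^ t - 1 : ℕ) : ℚ) = (q : ℚ) ^ t - 1 := by
      have h1 : (1 : ℕ) ≤ q ^ t := Nat.one_le_pow _ _ (by omega)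
      push_cast [h1]
      ring
    rw [hcast1]
    rw [div_div_eq_mul_div]
    field_simp

end
end

section
/- Assume p ∤ (m/t) and d | h. Then N_t = (d/(s·q)) · (q^t − 1 + M_t). -/
noncomputable section

open Complex Polynomial Classical

/-- The canonical additive character `x ↦ exp(2πi·tr(x)/p)` of a finite field `E`
of characteristic `p` (the prime field being `ZMod p`). -/
def eChar (p : ℕ) (E : Type*) [Field E] [Fintype E] [Algebra (ZMod p) E] (x : E) : ℂ :=
  Complex.exp (2 * Real.pi * Complex.I * ((Algebra.trace (ZMod p) E x).val : ℂ) / (p : ℂ))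

/-- `M_t = Σ_{c∈F^*} e_1(−(t/m)·c·a)·Σ_{x∈E^*} e_t(c·γ^{i_0}·x^{s/d})`, where
`mt = m/t`, `sd = s/d` and `(t/m)` is the inverse of `m/t` in the prime field. -/
def MM (p : ℕ) (F E : Type*) [Field F] [Fintype F] [Field E] [Fintype E]
    [Algebra F E] [Algebra (ZMod p) F] [Algebra (ZMod p) E]
    (γ : E) (a : F) (mt sd i0 : ℕ) : ℂ :=
  ∑ c : Fˣ, eChar p F (-(((mt : F))⁻¹ * c * a)) *
    ∑ x : Eˣ, eChar p E (algebraMap F E (c : F) * γ ^ i0 * (x : E) ^ sd)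

namespace StmtAux

open Finset

lemma exp_div_add (p : ℕ) (a b : ℕ) :
    Complex.exp (2 * Real.pi * Complex.I * ((a + b : ℕ)) / p)
      = Complex.exp (2 * Real.pi * Complex.I * (a : ℂ) / p) *
        Complex.exp (2 * Real.pi * Complex.I * (b : ℂ) / p) := by
  rw [← Complex.exp_add]
  congr 1
  push_cast
  ring

lemma exp_div_p_mul (p : ℕ) (hp : (p : ℂ) ≠ 0) (k a : ℕ) :
    Complex.exp (2 * Real.pi * Complex.I * ((p * k + a : ℕ)) / p)
      = Complex.exp (2 * Real.pi * Complex.I * (a : ℂ) / p) := by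
  have h : (2 * Real.pi * Complex.I * ((p * k + a : ℕ)) / p : ℂ)
      = (k : ℤ) * (2 * Real.pi * Complex.I) + 2 * Real.pi * Complex.I * (a : ℂ) / p := by
    push_cast
    field_simp
  rw [h, Complex.exp_add, Complex.exp_int_mul_two_pi_mul_I, one_mul]

/-- `eChar` as an additive character. -/
def eCharA (p : ℕ) [Fact p.Prime] (E : Type*) [Field E] [Fintype E] [Algebra (ZMod p) E] :
    AddChar E ℂ where
  toFun := eChar p E
  map_zero_eq_one' := by
    haveI : NeZero p := ⟨(Fact.out : p.Prime).ne_zero⟩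
    simp [eChar]
  map_add_eq_mul' := by
    intro x y
    haveI : NeZero p := ⟨(Fact.out : p.Prime).ne_zero⟩
    have hp : (p : ℂ) ≠ 0 := Nat.cast_ne_zero.mpr (Fact.out : p.Prime).ne_zero
    unfold eChar
    rw [map_add]
    set A := Algebra.trace (ZMod p) E x with hA
    set B := Algebra.trace (ZMod p) E y with hB
    have hv : A.val + B.val = p * ((A.val + B.val) / p) + (A + B).val := by
      rw [ZMod.val_add]
      exact (Nat.div_add_mod _ p).symm
    calc Complex.exp (2 * Real.pi * Complex.I * ((A + B).val : ℂ) / p)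
        = Complex.exp (2 * Real.pi * Complex.I *
            ((p * ((A.val + B.val) / p) + (A + B).val : ℕ)) / p) := by
          rw [exp_div_p_mul p hp]
      _ = Complex.exp (2 * Real.pi * Complex.I * ((A.val + B.val : ℕ)) / p) := by rw [← hv]
      _ = _ := exp_div_add p A.val B.val

@[simp] lemma eCharA_apply (p : ℕ) [Fact p.Prime] (E : Type*) [Field E] [Fintype E]
    [Algebra (ZMod p) E] (x : E) : eCharA p E x = eChar p E x := rfl

lemma eCharA_ne_one (p : ℕ) [Fact p.Prime] (E : Type*) [Field E] [Fintype E]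
    [Algebra (ZMod p) E] : eCharA p E ≠ 1 := by
  haveI : NeZero p := ⟨(Fact.out : p.Prime).ne_zero⟩
  have hp2 : 1 < p := (Fact.out : p.Prime).one_lt
  obtain ⟨x, hx⟩ := Algebra.trace_surjective (ZMod p) E 1
  rw [AddChar.ne_one_iff]
  refine ⟨x, ?_⟩
  rw [eCharA_apply]
  unfold eChar
  rw [hx]
  have hval : ((1 : ZMod p).val : ℂ) = 1 := by
    rw [ZMod.val_one p]
    norm_num
  rw [hval]
  intro hcon
  rw [Complex.exp_eq_one_iff] at hcon
  obtain ⟨n, hn⟩ := hcon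
  have hπI : (2 * Real.pi * Complex.I : ℂ) ≠ 0 := by
    simp [Real.pi_ne_zero, Complex.I_ne_zero]
  have hp0 : (p : ℂ) ≠ 0 := Nat.cast_ne_zero.mpr (by omega)
  have h1 : (1 : ℂ) = n * p := by
    field_simp at hn
    have h2 : (2 * Real.pi * Complex.I : ℂ) * 1 = (2 * Real.pi * Complex.I) * ((n : ℂ) * p) := by
      linear_combination (2 * Real.pi * Complex.I) * hn
    exact mul_left_cancel₀ hπI h2
  have h2 : (1 : ℤ) = n * p := by
    exact_mod_cast h1
  have : (p : ℤ) ∣ 1 := Dvd.intro_left n h2.symm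
  have := Int.le_of_dvd one_pos this
  omega

lemma eCharA_isPrimitive (p : ℕ) [Fact p.Prime] (F : Type*) [Field F] [Fintype F]
    [Algebra (ZMod p) F] : AddChar.IsPrimitive (eCharA p F) :=
  AddChar.IsPrimitive.of_ne_one (eCharA_ne_one p F)

lemma eChar_trace (p : ℕ) [Fact p.Prime] (F E : Type*) [Field F] [Fintype F] [Field E] [Fintype E]
    [Algebra F E] [Algebra (ZMod p) F] [Algebra (ZMod p) E] (x : E) :
    eChar p F (Algebra.trace F E x) = eChar p E x := by
  haveI : IsScalarTower (ZMod p) F E := IsScalarTower.of_algebraMap_eq'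
    (Subsingleton.elim _ _)
  unfold eChar
  rw [Algebra.trace_trace]

lemma step_a (n s mt h : ℕ) (hsn : s ∣ n) (hs : 0 < s) (hn0 : 0 < n) (j : ℤ) :
    (∃ k : ℕ, (mt : ℤ) * j ≡ (h : ℤ) + (s : ℤ) * k [ZMOD (n : ℤ)]) ↔
      (mt : ℤ) * j ≡ (h : ℤ) [ZMOD (s : ℤ)] := by
  constructor
  · rintro ⟨k, hk⟩
    have h1 : (mt : ℤ) * j ≡ (h : ℤ) + (s : ℤ) * k [ZMOD (s : ℤ)] :=
      hk.of_dvd (Int.natCast_dvd_natCast.mpr hsn)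
    have h2 : (h : ℤ) + (s : ℤ) * k ≡ (h : ℤ) [ZMOD (s : ℤ)] := by
      rw [Int.modEq_iff_dvd]
      exact ⟨-k, by ring⟩
    exact h1.trans h2
  · intro hmod
    obtain ⟨u, hu⟩ := Int.modEq_iff_dvd.mp hmod
    set v : ℤ := -u with hv
    have hmj : (mt : ℤ) * j = (h : ℤ) + (s : ℤ) * v := by
      rw [hv]; linarith [hu]
    set e : ℕ := n / s with he
    have hne' : e * s = n := Nat.div_mul_cancel hsn
    have hne : (n : ℤ) = (s : ℤ) * e := by rw [← hne']; push_cast; ring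
    have he0 : 0 < e := Nat.div_pos (Nat.le_of_dvd hn0 hsn) hs
    have heZ : (e : ℤ) ≠ 0 := by exact_mod_cast he0.ne'
    refine ⟨(v % e).toNat, ?_⟩
    have hk : ((v % e).toNat : ℤ) = v % e := Int.toNat_of_nonneg (Int.emod_nonneg v heZ)
    rw [Int.modEq_iff_dvd, hmj, hk]
    have heq : (h : ℤ) + s * (v % e) - ((h : ℤ) + s * v) = s * (v % e - v) := by ring
    rw [heq]
    obtain ⟨w, hw⟩ : (e : ℤ) ∣ v % e - v := ⟨-(v / e), by rw [Int.emod_def]; ring⟩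
    exact ⟨w, by rw [hw, hne]; ring⟩

lemma step_bc (s mt h d i0 : ℕ) (hs : 0 < s) (hd : d = Nat.gcd mt s) (hmt : 0 < mt)
    (hdh : d ∣ h) (hi0 : (mt / d) * i0 ≡ h / d [MOD s / d]) (j : ℤ) :
    (mt : ℤ) * j ≡ (h : ℤ) [ZMOD (s : ℤ)] ↔ j ≡ (i0 : ℤ) [ZMOD ((s / d : ℕ) : ℤ)] := by
  have hdmt : d ∣ mt := hd ▸ Nat.gcd_dvd_left mt s
  have hds : d ∣ s := hd ▸ Nat.gcd_dvd_right mt s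
  have hd0 : 0 < d := hd ▸ Nat.gcd_pos_of_pos_right mt hs
  set mt' := mt / d with hmt'
  set sd := s / d with hsd
  set h' := h / d with hh'
  have hmteq : mt = d * mt' := (Nat.mul_div_cancel' hdmt).symm
  have hseq : s = d * sd := (Nat.mul_div_cancel' hds).symm
  have hheq : h = d * h' := (Nat.mul_div_cancel' hdh).symm
  have hsd0 : 0 < sd := Nat.div_pos (Nat.le_of_dvd hs hds) hd0
  have hco : Nat.Coprime mt' sd := by
    rw [hmt', hsd, hd]
    exact Nat.coprime_div_gcd_div_gcd (Nat.gcd_pos_of_pos_right mt hs)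
  have hdZ : (d : ℤ) ≠ 0 := by exact_mod_cast hd0.ne'
  have hB : ((mt : ℤ) * j ≡ (h : ℤ) [ZMOD (s : ℤ)]) ↔
      ((mt' : ℤ) * j ≡ (h' : ℤ) [ZMOD (sd : ℤ)]) := by
    rw [Int.modEq_iff_dvd, Int.modEq_iff_dvd]
    have h1 : (h : ℤ) - (mt : ℤ) * j = (d : ℤ) * ((h' : ℤ) - (mt' : ℤ) * j) := by
      rw [hheq, hmteq]; push_cast; ring
    have h2 : (s : ℤ) = (d : ℤ) * (sd : ℤ) := by rw [hseq]; push_cast; ring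
    rw [h1, h2]
    exact mul_dvd_mul_iff_left hdZ
  rw [hB]
  have hi0' : (mt' : ℤ) * (i0 : ℤ) ≡ (h' : ℤ) [ZMOD (sd : ℤ)] := by
    exact_mod_cast (Int.natCast_modEq_iff.mpr hi0)
  constructor
  · intro hC
    have hcc : (mt' : ℤ) * j ≡ (mt' : ℤ) * (i0 : ℤ) [ZMOD (sd : ℤ)] := hC.trans hi0'.symm
    have hgcd : Int.gcd (sd : ℤ) (mt' : ℤ) = 1 := by
      simpa [Int.gcd_natCast_natCast] using (Nat.coprime_comm.mp hco)
    have := Int.ModEq.cancel_left_div_gcd (by exact_mod_cast hsd0) hcc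
    rwa [hgcd, Nat.cast_one, Int.ediv_one] at this
  · intro hC
    exact (hC.mul_left (mt' : ℤ)).trans hi0'

variable {G : Type*} [CommGroup G] [Fintype G] [DecidableEq G]

lemma card_pow_eq_one (γ : G) (hγ : ∀ u : G, u ∈ Subgroup.zpowers γ) (n : ℕ)
    (hn : n ∣ Fintype.card G) (hn0 : 0 < n) :
    (univ.filter (fun w : G => w ^ n = 1)).card = n := by
  have horder : orderOf γ = Fintype.card G := by
    rw [orderOf_eq_card_of_forall_mem_zpowers hγ, Nat.card_eq_fintype_card]
  set Nc := Fintype.card G with hNc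
  have hNc0 : 0 < Nc := Fintype.card_pos
  set e := Nc / n with he
  have hen : e * n = Nc := Nat.div_mul_cancel hn
  have he0 : 0 < e := Nat.div_pos (Nat.le_of_dvd hNc0 hn) hn0
  have hset : ∀ w : G, w ^ n = 1 ↔ w ∈ Subgroup.zpowers (γ ^ e) := by
    intro w
    constructor
    · intro hw
      obtain ⟨j, hj⟩ := Subgroup.mem_zpowers_iff.mp (hγ w)
      have : (γ ^ j) ^ (n : ℤ) = 1 := by rw [hj]; exact_mod_cast hw
      rw [← zpow_mul] at this
      have hdvd : ((orderOf γ : ℤ)) ∣ j * n := orderOf_dvd_iff_zpow_eq_one.mpr this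
      rw [horder, ← hen] at hdvd
      push_cast at hdvd
      have hnZ : (n : ℤ) ≠ 0 := by exact_mod_cast hn0.ne'
      have hediv : (e : ℤ) ∣ j := by
        rcases hdvd with ⟨c, hc⟩
        refine ⟨c, ?_⟩
        have : j * n = e * c * n := by rw [hc]; ring
        exact mul_right_cancel₀ hnZ this
      obtain ⟨j', hj'⟩ := hediv
      refine Subgroup.mem_zpowers_iff.mpr ⟨j', ?_⟩
      rw [← hj, hj', ← zpow_natCast γ e, ← zpow_mul]
    · intro hw
      obtain ⟨j, hj⟩ := Subgroup.mem_zpowers_iff.mp hw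
      have h1 : (γ ^ e) ^ (n : ℕ) = 1 := by
        rw [← pow_mul, hen, ← horder, pow_orderOf_eq_one]
      calc w ^ n = ((γ ^ e) ^ j) ^ (n : ℕ) := by rw [hj]
        _ = ((γ ^ e) ^ (n : ℕ)) ^ j := by
            rw [← zpow_natCast ((γ ^ e) ^ j), ← zpow_mul, mul_comm, zpow_mul, zpow_natCast]
        _ = 1 := by rw [h1, one_zpow]
  have hecard : (univ.filter (fun w : G => w ^ n = 1)).card
      = Nat.card (Subgroup.zpowers (γ ^ e)) := by
    rw [Nat.card_eq_fintype_card]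
    rw [← Fintype.card_subtype]
    apply Fintype.card_congr
    exact Equiv.subtypeEquivRight (fun w => (hset w))
  have hedvd : e ∣ Nc := ⟨n, hen.symm⟩
  rw [hecard, Nat.card_zpowers, orderOf_pow, horder, Nat.gcd_eq_right hedvd, ← hen,
    Nat.mul_div_cancel_left n he0]

lemma fiber_card (γ : G) (hγ : ∀ u : G, u ∈ Subgroup.zpowers γ) (n i0 : ℕ)
    (hn : n ∣ Fintype.card G) (hn0 : 0 < n) (z0 : G) :
    (univ.filter (fun z : G => γ ^ i0 * z ^ n = γ ^ i0 * z0 ^ n)).card = n := by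
  refine Finset.card_nbij' (fun z => z0⁻¹ * z) (fun w => z0 * w) ?_ ?_ ?_ ?_ |>.trans
    (card_pow_eq_one γ hγ n hn hn0)
  · intro z hz
    simp only [mem_coe, mem_filter, mem_univ, true_and] at hz ⊢
    have hzn : z ^ n = z0 ^ n := mul_left_cancel hz
    rw [mul_pow, inv_pow, hzn, inv_mul_cancel]
  · intro w hw
    simp only [mem_coe, mem_filter, mem_univ, true_and] at hw ⊢
    rw [mul_pow, hw, mul_one]
  · intro z _; simp only []; group
  · intro w _; simp only []; group

omit [DecidableEq G] in
lemma coset_iff (γ : G) (hγ : ∀ u : G, u ∈ Subgroup.zpowers γ) (n i0 : ℕ)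
    (hn : n ∣ Fintype.card G) (y : G) (j : ℤ) (hy : y = γ ^ j) :
    (∃ z : G, y = γ ^ i0 * z ^ n) ↔ j ≡ (i0 : ℤ) [ZMOD (n : ℤ)] := by
  have horder : orderOf γ = Fintype.card G := by
    rw [orderOf_eq_card_of_forall_mem_zpowers hγ, Nat.card_eq_fintype_card]
  constructor
  · rintro ⟨z, hz⟩
    obtain ⟨w, hw⟩ := Subgroup.mem_zpowers_iff.mp (hγ z)
    have hz' : z ^ (n : ℕ) = γ ^ ((n : ℤ) * w) := by
      rw [← hw, ← zpow_natCast (γ ^ w) n, ← zpow_mul, mul_comm]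
    have : γ ^ j = γ ^ ((i0 : ℤ) + (n : ℤ) * w) := by
      rw [← hy, hz, hz', ← zpow_natCast γ i0, ← zpow_add]
    have hmod : j ≡ (i0 : ℤ) + (n : ℤ) * w [ZMOD (orderOf γ : ℤ)] :=
      zpow_eq_zpow_iff_modEq.mp this
    have hmod2 : j ≡ (i0 : ℤ) + (n : ℤ) * w [ZMOD (n : ℤ)] := by
      refine hmod.of_dvd ?_
      rw [horder]
      exact_mod_cast Int.natCast_dvd_natCast.mpr hn
    have : (i0 : ℤ) + (n : ℤ) * w ≡ (i0 : ℤ) [ZMOD (n : ℤ)] := by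
      rw [Int.modEq_iff_dvd]; exact ⟨-w, by ring⟩
    exact hmod2.trans this
  · intro hmod
    obtain ⟨u, hu⟩ := Int.modEq_iff_dvd.mp hmod
    refine ⟨γ ^ (-u), ?_⟩
    rw [hy, ← zpow_natCast (γ ^ (-u)) n, ← zpow_mul, ← zpow_natCast γ i0, ← zpow_add]
    congr 1
    linarith [hu]

lemma sum_field_split {F : Type*} [Field F] [Fintype F] [DecidableEq F] (f : F → ℂ) :
    ∑ c : F, f c = f 0 + ∑ c : Fˣ, f (c : F) := by
  rw [← Finset.add_sum_erase _ f (Finset.mem_univ 0)]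
  congr 1
  refine (Finset.sum_nbij' (fun (u : Fˣ) => (u : F))
    (fun c => if hc : c = 0 then 1 else Units.mk0 c hc) ?_ ?_ ?_ ?_ ?_).symm
  · intro u _
    exact Finset.mem_erase.mpr ⟨u.ne_zero, Finset.mem_univ _⟩
  · intro c hc
    exact Finset.mem_univ _
  · intro u _
    simp [u.ne_zero]
  · intro c hc
    have hc0 : c ≠ 0 := (Finset.mem_erase.mp hc).1
    simp [hc0]
  · intro u _
    rfl

end StmtAux

open StmtAux Finset

/-- If `p ∤ m/t` and `d ∣ h` then `N_t = (d/(s·q))·(q^t − 1 + M_t)`. -/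
theorem stmt2 (p r m s h t d i0 : ℕ) [Fact p.Prime] (hr : 0 < r) (hm : 2 ≤ m)
    (ht : t ∣ m) (ht0 : 0 < t)
    (F E K : Type*) [Field F] [Fintype F] [Field E] [Fintype E] [Field K] [Fintype K]
    [Algebra F E] [Algebra E K] [Algebra F K] [IsScalarTower F E K]
    [Algebra (ZMod p) F] [Algebra (ZMod p) E]
    (hF : Fintype.card F = p ^ r) (hE : Fintype.card E = Fintype.card F ^ t)
    (hK : Fintype.card K = Fintype.card F ^ m)
    (g : Fˣ) (hg : ∀ u : Fˣ, u ∈ Subgroup.zpowers g)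
    (γ : Eˣ) (hγ : ∀ u : Eˣ, u ∈ Subgroup.zpowers γ)
    (hγg : Algebra.norm F ((γ : Eˣ) : E) = (g : F))
    (hs : 0 < s) (hsq : s ∣ Fintype.card F - 1) (hh : h < s)
    (hd : d = Nat.gcd (m / t) s)
    (hpmt : ¬ p ∣ m / t) (hdh : d ∣ h)
    (hi0 : i0 < s / d ∧ (m / (d * t)) * i0 ≡ h / d [MOD s / d]) (a : F) :
    (NN F K (g : F) s h t a : ℂ) =
      ((d : ℂ) / ((s : ℂ) * (Fintype.card F : ℂ))) *
        ((Fintype.card F : ℂ) ^ t - 1 + MM p F E ((γ : Eˣ) : E) a (m / t) (s / d) i0) := by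
  classical
  have hprime : p.Prime := Fact.out
  haveI : NeZero p := ⟨hprime.ne_zero⟩
  set q := Fintype.card F with hq
  have hq1 : 1 < q := Fintype.one_lt_card
  have hqt1 : 1 ≤ q ^ t := Nat.one_le_pow _ _ (by omega)
  have hqt2 : 1 < q ^ t := Nat.one_lt_pow ht0.ne' hq1
  set mt := m / t with hmtdef
  have hmt0 : 0 < mt := Nat.div_pos (Nat.le_of_dvd (by omega) ht) ht0
  have htm : t * mt = m := Nat.mul_div_cancel' ht
  have hds : d ∣ s := hd ▸ Nat.gcd_dvd_right mt s
  have hdmt : d ∣ mt := hd ▸ Nat.gcd_dvd_left mt s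
  have hd0 : 0 < d := hd ▸ Nat.gcd_pos_of_pos_right mt hs
  set sd := s / d with hsddef
  have hsd0 : 0 < sd := Nat.div_pos (Nat.le_of_dvd hs hds) hd0
  have hdsd : d * sd = s := Nat.mul_div_cancel' hds
  -- rank facts
  have hrankE : Module.finrank F E = t := by
    have h1 : Fintype.card E = q ^ Module.finrank F E := Module.card_eq_pow_finrank
    rw [hE] at h1
    exact (Nat.pow_right_injective (by omega) h1).symm
  have hrankK : Module.finrank F K = m := by
    have h1 : Fintype.card K = q ^ Module.finrank F K := Module.card_eq_pow_finrank
    rw [hK] at h1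
    exact (Nat.pow_right_injective (by omega) h1).symm
  have hrankEK : Module.finrank E K = mt := by
    have h1 : Module.finrank F E * Module.finrank E K = Module.finrank F K :=
      Module.finrank_mul_finrank F E K
    rw [hrankE, hrankK] at h1
    exact Nat.eq_of_mul_eq_mul_left ht0 (h1.trans htm.symm)
  -- the multiplier u = (m/t : F)
  haveI hCharF : CharP F p := charP_of_injective_algebraMap (algebraMap (ZMod p) F).injective p
  set u : F := (mt : F) with hudef
  have hu0 : u ≠ 0 := by
    rw [hudef, Ne, CharP.cast_eq_zero_iff F p]
    exact hpmt
  set b : F := u⁻¹ * a with hbdef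
  -- trace and norm of elements of the subfield
  have hTr : ∀ y : E, Algebra.trace F K (algebraMap E K y) = u * Algebra.trace F E y := by
    intro y
    rw [← Algebra.trace_trace (S := E), Algebra.trace_algebraMap, hrankEK, map_nsmul,
      nsmul_eq_mul, hudef]
  have hNo : ∀ y : E, Algebra.norm F (algebraMap E K y) = (Algebra.norm F y) ^ mt := by
    intro y
    rw [← Algebra.norm_norm (R := F) (S := E) (a := algebraMap E K y), Algebra.norm_algebraMap,
      hrankEK, map_pow]
  -- identification of the subfield
  have hrange : ∀ x : K, x ^ q ^ t = x ↔ ∃ y : E, algebraMap E K y = x := by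
    have hsub : Set.range (algebraMap E K) ⊆ {x : K | x ^ q ^ t = x} := by
      rintro _ ⟨y, rfl⟩
      simp only [Set.mem_setOf_eq, ← map_pow]
      rw [← hE, FiniteField.pow_card]
    have hPne : (X ^ q ^ t - X : K[X]) ≠ 0 :=
      FiniteField.X_pow_card_pow_sub_X_ne_zero K ht0.ne' hq1
    have hsub2 : {x : K | x ^ q ^ t = x} ⊆ ((X ^ q ^ t - X : K[X]).roots.toFinset : Set K) := by
      intro x hx
      simp only [Set.mem_setOf_eq] at hx
      simp only [Finset.coe_sort_coe, Multiset.mem_toFinset, Finset.mem_coe]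
      rw [Polynomial.mem_roots hPne]
      simp [Polynomial.IsRoot, sub_eq_zero, hx]
    have hfin : ({x : K | x ^ q ^ t = x}).Finite := Set.toFinite _
    have hcard1 : {x : K | x ^ q ^ t = x}.ncard ≤ q ^ t := by
      refine le_trans (Set.ncard_le_ncard hsub2 (Set.toFinite _)) ?_
      rw [Set.ncard_coe_finset]
      refine le_trans (Multiset.toFinset_card_le _) ?_
      refine le_trans (Polynomial.card_roots' _) ?_
      rw [Polynomial.natDegree_sub_eq_left_of_natDegree_lt, Polynomial.natDegree_X_pow]
      rw [Polynomial.natDegree_X_pow, Polynomial.natDegree_X]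
      omega
    have hcard2 : (Set.range (algebraMap E K)).ncard = q ^ t := by
      rw [← Nat.card_coe_set_eq, Nat.card_range_of_injective (algebraMap E K).injective,
        Nat.card_eq_fintype_card, hE]
    have hEq : Set.range (algebraMap E K) = {x : K | x ^ q ^ t = x} := by
      exact Set.eq_of_subset_of_ncard_le hsub (by rw [hcard2]; exact hcard1) hfin
    intro x
    constructor
    · intro hx
      have : x ∈ Set.range (algebraMap E K) := by rw [hEq]; exact hx
      exact this
    · rintro ⟨y, rfl⟩
      exact hsub ⟨y, rfl⟩
  -- orders of the generators
  have hgord : orderOf g = q - 1 := by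
    rw [orderOf_eq_card_of_forall_mem_zpowers hg, Nat.card_eq_fintype_card, Fintype.card_units]
  have hγord : orderOf γ = q ^ t - 1 := by
    rw [orderOf_eq_card_of_forall_mem_zpowers hγ, Nat.card_eq_fintype_card,
      Fintype.card_units, hE]
  have hcardEx : Fintype.card Eˣ = q ^ t - 1 := by rw [Fintype.card_units, hE]
  have hsds : sd ∣ s := Dvd.intro_left d hdsd
  have hq1dvd : q - 1 ∣ q ^ t - 1 := by
    have := Nat.sub_dvd_pow_sub_pow q 1 t
    simpa using this
  have hsdcard : sd ∣ Fintype.card Eˣ := by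
    rw [hcardEx]
    exact dvd_trans (dvd_trans hsds hsq) hq1dvd
  -- the norm condition as a coset condition
  have hi0' : (mt / d) * i0 ≡ h / d [MOD sd] := by
    have hdiv : m / (d * t) = mt / d := by
      rw [hmtdef, Nat.div_div_eq_div_mul, mul_comm t d]
    rw [← hdiv]
    exact hi0.2
  have hcond : ∀ (y : Eˣ),
      (∃ k : ℕ, (Algebra.norm F ((y : Eˣ) : E)) ^ mt = ((g : Fˣ) : F) ^ (h + s * k)) ↔
      (∃ z : Eˣ, y = γ ^ i0 * z ^ sd) := by
    intro y
    obtain ⟨j, hj⟩ := Subgroup.mem_zpowers_iff.mp (hγ y)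
    have hν : ∀ k : ℕ,
        ((Algebra.norm F ((y : Eˣ) : E)) ^ mt = ((g : Fˣ) : F) ^ (h + s * k)) ↔
        ((Units.map (Algebra.norm F) y : Fˣ) ^ mt = g ^ (h + s * k)) := by
      intro k
      rw [Units.ext_iff]
      push_cast
      rfl
    have hνγ : (Units.map (Algebra.norm F) γ : Fˣ) = g := Units.ext (by simpa using hγg)
    have hνy : (Units.map (Algebra.norm F) y : Fˣ) = g ^ j := by
      rw [← hj, map_zpow, hνγ]
    have hstep : ∀ k : ℕ,
        ((Units.map (Algebra.norm F) y : Fˣ) ^ mt = g ^ (h + s * k)) ↔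
        (j * (mt : ℤ) ≡ (h : ℤ) + (s : ℤ) * k [ZMOD ((q - 1 : ℕ) : ℤ)]) := by
      intro k
      rw [hνy, ← zpow_natCast (g ^ j) mt, ← zpow_mul, ← zpow_natCast g (h + s * k),
        zpow_eq_zpow_iff_modEq, hgord]
      push_cast
      rfl
    calc (∃ k : ℕ, (Algebra.norm F ((y : Eˣ) : E)) ^ mt = ((g : Fˣ) : F) ^ (h + s * k))
        ↔ (∃ k : ℕ, (mt : ℤ) * j ≡ (h : ℤ) + (s : ℤ) * k [ZMOD ((q - 1 : ℕ) : ℤ)]) := by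
          refine exists_congr fun k => ?_
          rw [hν k, hstep k, mul_comm (mt : ℤ) j]
      _ ↔ ((mt : ℤ) * j ≡ (h : ℤ) [ZMOD (s : ℤ)]) :=
          step_a (q - 1) s mt h hsq hs (by omega) j
      _ ↔ (j ≡ (i0 : ℤ) [ZMOD ((sd : ℕ) : ℤ)]) :=
          step_bc s mt h d i0 hs hd hmt0 hdh hi0' j
      _ ↔ (∃ z : Eˣ, y = γ ^ i0 * z ^ sd) :=
          (coset_iff γ hγ sd i0 hsdcard y j hj.symm).symm
  -- counting: NN as a Finset card over Eˣ
  have hmain : ∀ y : Eˣ,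
      ((algebraMap E K ((y : Eˣ) : E)) ^ q ^ t = algebraMap E K ((y : Eˣ) : E) ∧
        Algebra.trace F K (algebraMap E K ((y : Eˣ) : E)) = a ∧
        ∃ k : ℕ, Algebra.norm F (algebraMap E K ((y : Eˣ) : E)) = ((g : Fˣ) : F) ^ (h + s * k))
      ↔ (Algebra.trace F E ((y : Eˣ) : E) = b ∧ ∃ z : Eˣ, y = γ ^ i0 * z ^ sd) := by
    intro y
    have h1 : (algebraMap E K ((y : Eˣ) : E)) ^ q ^ t = algebraMap E K ((y : Eˣ) : E) :=
      (hrange _).mpr ⟨_, rfl⟩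
    have h2 : (Algebra.trace F K (algebraMap E K ((y : Eˣ) : E)) = a) ↔
        (Algebra.trace F E ((y : Eˣ) : E) = b) := by
      rw [hTr, hbdef]
      constructor
      · intro hh'
        rw [← hh']
        field_simp
      · intro hh'
        rw [hh']
        field_simp
    have h3 : (∃ k : ℕ, Algebra.norm F (algebraMap E K ((y : Eˣ) : E)) =
        ((g : Fˣ) : F) ^ (h + s * k)) ↔ (∃ z : Eˣ, y = γ ^ i0 * z ^ sd) := by
      rw [← hcond y]
      exact exists_congr fun k => by rw [hNo]
    exact ⟨fun ⟨_, ha2, ha3⟩ => ⟨h2.mp ha2, h3.mp ha3⟩,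
      fun ⟨hb2, hb3⟩ => ⟨h1, h2.mpr hb2, h3.mpr hb3⟩⟩
  have hNNcard : (NN F K ((g : Fˣ) : F) s h t a : ℕ) =
      (univ.filter (fun y : Eˣ =>
        Algebra.trace F E ((y : Eˣ) : E) = b ∧ ∃ z : Eˣ, y = γ ^ i0 * z ^ sd)).card := by
    have hconv : (univ.filter (fun y : Eˣ =>
        Algebra.trace F E ((y : Eˣ) : E) = b ∧ ∃ z : Eˣ, y = γ ^ i0 * z ^ sd)).card
        = Nat.card {y : Eˣ // Algebra.trace F E ((y : Eˣ) : E) = b ∧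
            ∃ z : Eˣ, y = γ ^ i0 * z ^ sd} := by
      rw [Nat.card_eq_fintype_card, Fintype.card_subtype]
    rw [NN, hconv]
    refine Nat.card_congr (Equiv.symm (Equiv.ofBijective
      (fun y : {y : Eˣ // Algebra.trace F E ((y : Eˣ) : E) = b ∧
          ∃ z : Eˣ, y = γ ^ i0 * z ^ sd} =>
        (⟨algebraMap E K ((y.1 : Eˣ) : E), (hmain y.1).mpr y.2⟩ :
          {x : K // x ^ q ^ t = x ∧ Algebra.trace F K x = a ∧
            ∃ k : ℕ, Algebra.norm F x = ((g : Fˣ) : F) ^ (h + s * k)})) ⟨?_, ?_⟩))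
    · rintro ⟨y1, hy1⟩ ⟨y2, hy2⟩ hEq
      have hval := Subtype.mk_eq_mk.mp hEq
      exact Subtype.ext (Units.ext ((algebraMap E K).injective hval))
    · rintro ⟨x, hx1, hx2, hx3⟩
      obtain ⟨y0, hy0⟩ := (hrange x).mp hx1
      have hy0ne : y0 ≠ 0 := by
        rintro rfl
        rw [map_zero] at hy0
        obtain ⟨k, hk⟩ := hx3
        rw [← hy0, Algebra.norm_zero] at hk
        exact (pow_ne_zero _ (Units.ne_zero g)) hk.symm
      refine ⟨⟨Units.mk0 y0 hy0ne, ?_⟩, ?_⟩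
      · refine (hmain _).mp ?_
        rw [show ((Units.mk0 y0 hy0ne : Eˣ) : E) = y0 from rfl, hy0]
        exact ⟨hx1, hx2, hx3⟩
      · exact Subtype.ext hy0
  -- the character sum computation
  set T : Finset Eˣ := univ.filter (fun y : Eˣ => ∃ z : Eˣ, y = γ ^ i0 * z ^ sd) with hT
  have hTfilter : (univ.filter (fun y : Eˣ =>
      Algebra.trace F E ((y : Eˣ) : E) = b ∧ ∃ z : Eˣ, y = γ ^ i0 * z ^ sd))
      = T.filter (fun y => Algebra.trace F E ((y : Eˣ) : E) = b) := by
    rw [hT, Finset.filter_filter]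
    apply Finset.filter_congr
    intro y _
    exact and_comm
  have key : (q : ℂ) * ((NN F K ((g : Fˣ) : F) s h t a : ℕ) : ℂ) =
      ∑ y ∈ T, ∑ c : F, (eCharA p F) (c * (Algebra.trace F E ((y : Eˣ) : E) - b)) := by
    have hinner : ∀ y : Eˣ, ∑ c : F, (eCharA p F) (c * (Algebra.trace F E ((y : Eˣ) : E) - b))
        = if Algebra.trace F E ((y : Eˣ) : E) = b then (q : ℂ) else 0 := by
      intro y
      have := AddChar.sum_mulShift (ψ := eCharA p F)
        (Algebra.trace F E ((y : Eˣ) : E) - b) (eCharA_isPrimitive p F)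
      simpa [sub_eq_zero] using this
    rw [Finset.sum_congr rfl fun y _ => hinner y]
    rw [Finset.sum_ite, Finset.sum_const, Finset.sum_const_zero, add_zero, nsmul_eq_mul]
    rw [hNNcard, hTfilter]
    ring
  have expand : ∑ y ∈ T, ∑ c : F, (eCharA p F) (c * (Algebra.trace F E ((y : Eˣ) : E) - b))
      = (T.card : ℂ) + ∑ c : Fˣ, (eCharA p F) (-((c : F) * b)) *
          ∑ y ∈ T, (eCharA p E) (algebraMap F E (c : F) * ((y : Eˣ) : E)) := by
    rw [Finset.sum_comm]
    have hterm : ∀ (c : F) (y : Eˣ), (eCharA p F) (c * (Algebra.trace F E ((y : Eˣ) : E) - b))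
        = (eCharA p F) (-(c * b)) * (eCharA p E) (algebraMap F E c * ((y : Eˣ) : E)) := by
      intro c y
      have htr : c * Algebra.trace F E ((y : Eˣ) : E)
          = Algebra.trace F E (algebraMap F E c * ((y : Eˣ) : E)) := by
        rw [← Algebra.smul_def, map_smul, smul_eq_mul]
      have hsplit : c * (Algebra.trace F E ((y : Eˣ) : E) - b)
          = (-(c * b)) + Algebra.trace F E (algebraMap F E c * ((y : Eˣ) : E)) := by
        rw [← htr]; ring
      rw [hsplit, AddChar.map_add_eq_mul]
      congr 1
      rw [eCharA_apply, eCharA_apply, eChar_trace p F E]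
    calc ∑ c : F, ∑ y ∈ T, (eCharA p F) (c * (Algebra.trace F E ((y : Eˣ) : E) - b))
        = ∑ c : F, (eCharA p F) (-(c * b)) *
            ∑ y ∈ T, (eCharA p E) (algebraMap F E c * ((y : Eˣ) : E)) := by
          refine Finset.sum_congr rfl fun c _ => ?_
          rw [Finset.mul_sum]
          exact Finset.sum_congr rfl fun y _ => hterm c y
      _ = _ := by
          rw [sum_field_split (f := fun c => (eCharA p F) (-(c * b)) *
            ∑ y ∈ T, (eCharA p E) (algebraMap F E c * ((y : Eˣ) : E)))]
          congr 1
          simp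
  have hmaps : ∀ z : Eˣ, z ∈ (univ : Finset Eˣ) → (γ ^ i0 * z ^ sd) ∈ T := by
    intro z _
    rw [hT]
    exact Finset.mem_filter.mpr ⟨Finset.mem_univ _, ⟨z, rfl⟩⟩
  have hfiber : ∀ f : Eˣ → ℂ, ∑ z : Eˣ, f (γ ^ i0 * z ^ sd) = (sd : ℂ) * ∑ y ∈ T, f y := by
    intro f
    rw [← Finset.sum_fiberwise_of_maps_to hmaps (fun z => f (γ ^ i0 * z ^ sd))]
    rw [Finset.mul_sum]
    refine Finset.sum_congr rfl fun y hy => ?_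
    obtain ⟨z0, hz0⟩ := (Finset.mem_filter.mp (hT ▸ hy)).2
    have hcongr : ∀ z ∈ univ.filter (fun z : Eˣ => γ ^ i0 * z ^ sd = y),
        f (γ ^ i0 * z ^ sd) = f y := fun z hz => by rw [(Finset.mem_filter.mp hz).2]
    rw [Finset.sum_congr rfl hcongr, Finset.sum_const, nsmul_eq_mul]
    have hfeq : univ.filter (fun z : Eˣ => γ ^ i0 * z ^ sd = y)
        = univ.filter (fun z : Eˣ => γ ^ i0 * z ^ sd = γ ^ i0 * z0 ^ sd) :=
      Finset.filter_congr fun z _ => by rw [hz0]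
    rw [hfeq, fiber_card γ hγ sd i0 hsdcard hsd0 z0]
  have hTcardC : ((q : ℂ) ^ t - 1) = (sd : ℂ) * (T.card : ℂ) := by
    have h1 := hfiber (fun _ => (1 : ℂ))
    simp only [Finset.sum_const, nsmul_eq_mul, mul_one] at h1
    rw [Finset.card_univ, hcardEx] at h1
    have h2 : ((q ^ t - 1 : ℕ) : ℂ) = (q : ℂ) ^ t - 1 := by
      rw [Nat.cast_sub hqt1]
      push_cast
      ring
    rw [← h2, h1]
  have hMM : MM p F E ((γ : Eˣ) : E) a mt sd i0 =
      ∑ c : Fˣ, (eCharA p F) (-((c : F) * b)) *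
        ((sd : ℂ) * ∑ y ∈ T, (eCharA p E) (algebraMap F E (c : F) * ((y : Eˣ) : E))) := by
    rw [MM]
    refine Finset.sum_congr rfl fun c _ => ?_
    congr 1
    · rw [eCharA_apply]
      congr 1
      rw [hbdef, hudef]
      ring
    · rw [← hfiber (fun y => (eCharA p E) (algebraMap F E (c : F) * ((y : Eˣ) : E)))]
      refine Finset.sum_congr rfl fun z _ => ?_
      rw [eCharA_apply]
      congr 1
      push_cast
      rw [mul_assoc]
  have final : ((sd : ℂ) * q) * ((NN F K ((g : Fˣ) : F) s h t a : ℕ) : ℂ)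
      = ((q : ℂ) ^ t - 1) + MM p F E ((γ : Eˣ) : E) a mt sd i0 := by
    calc ((sd : ℂ) * q) * ((NN F K ((g : Fˣ) : F) s h t a : ℕ) : ℂ)
        = (sd : ℂ) * ((q : ℂ) * ((NN F K ((g : Fˣ) : F) s h t a : ℕ) : ℂ)) := by ring
      _ = (sd : ℂ) * ((T.card : ℂ) + ∑ c : Fˣ, (eCharA p F) (-((c : F) * b)) *
            ∑ y ∈ T, (eCharA p E) (algebraMap F E (c : F) * ((y : Eˣ) : E))) := by
          rw [key, expand]
      _ = (sd : ℂ) * (T.card : ℂ) + ∑ c : Fˣ, (eCharA p F) (-((c : F) * b)) *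
            ((sd : ℂ) * ∑ y ∈ T, (eCharA p E) (algebraMap F E (c : F) * ((y : Eˣ) : E))) := by
          rw [mul_add, Finset.mul_sum]
          congr 1
          exact Finset.sum_congr rfl fun c _ => by ring
      _ = ((q : ℂ) ^ t - 1) + MM p F E ((γ : Eˣ) : E) a mt sd i0 := by
          rw [← hTcardC, ← hMM]
  have hs0C : (s : ℂ) ≠ 0 := Nat.cast_ne_zero.mpr hs.ne'
  have hq0C : (q : ℂ) ≠ 0 := Nat.cast_ne_zero.mpr (by omega)
  have hd0C : (d : ℂ) ≠ 0 := Nat.cast_ne_zero.mpr hd0.ne'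
  have hsd0C : (sd : ℂ) ≠ 0 := Nat.cast_ne_zero.mpr hsd0.ne'
  have hcast : (d : ℂ) * (sd : ℂ) = (s : ℂ) := by
    exact_mod_cast congrArg (Nat.cast : ℕ → ℂ) hdsd
  rw [← final, ← hcast]
  field_simp

end
end

section
/- Assume p ∤ (m/t), d | h, and a ≠ 0. Set a_0 = −(m/t)·a^{−1} ∈ F_q^* (with m/t taken mod p), t_0 = (q^t−1)/(q−1), and u = s/(d·l). Then l = gcd(t, s/d) = gcd(t_0, s/d) and M_t = (1/u) · Σ_{j=0}^{u−1} ( Σ_{x ∈ F_{q^t}^*} e_t(a_0·γ_t^{t_0·j + i_0}·x^{s/d}) ) · ( Σ_{c ∈ F_q^*} e_1(g^j·c^u) ). -/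
set_option maxHeartbeats 1600000

noncomputable section

open Complex Polynomial Classical

/-- splitting a sum over `range (A*B)` along residues mod `A`. -/
lemma sum_range_mul_split {M : Type*} [AddCommMonoid M] (f : ℕ → M) (A B : ℕ) :
    ∑ k ∈ Finset.range (A * B), f k
      = ∑ j ∈ Finset.range A, ∑ n ∈ Finset.range B, f (j + A * n) := by
  rcases Nat.eq_zero_or_pos A with rfl | hA
  · simp
  rw [← Finset.sum_product (Finset.range A) (Finset.range B) (fun q => f (q.1 + A * q.2))]
  refine Finset.sum_nbij' (fun k => (k % A, k / A)) (fun q => q.1 + A * q.2) ?_ ?_ ?_ ?_ ?_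
  · intro k hk
    simp only [Finset.mem_range, Finset.mem_product] at hk ⊢
    exact ⟨Nat.mod_lt _ hA, Nat.div_lt_of_lt_mul hk⟩
  · intro q hq
    simp only [Finset.mem_range, Finset.mem_product] at hq ⊢
    calc q.1 + A * q.2 < A * (q.2 + 1) := by nlinarith [hq.1]
      _ ≤ A * B := Nat.mul_le_mul_left _ hq.2
  · intro k _; exact Nat.mod_add_div k A
  · intro q hq
    simp only [Finset.mem_range, Finset.mem_product] at hq
    have h1 : (q.1 + A * q.2) % A = q.1 := by
      rw [Nat.add_mul_mod_self_left, Nat.mod_eq_of_lt hq.1]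
    have h2 : (q.1 + A * q.2) / A = q.2 := by
      rw [Nat.add_mul_div_left _ _ hA, Nat.div_eq_of_lt hq.1, zero_add]
    exact Prod.ext h1 h2
  · intro k _
    congr 1
    exact (Nat.mod_add_div k A).symm

/-- summing over a cyclic group via powers of a generator. -/
lemma sum_gen {G : Type*} [Group G] [Fintype G] (g : G) (hg : ∀ x : G, x ∈ Subgroup.zpowers g)
    {M : Type*} [AddCommMonoid M] (f : G → M) :
    ∑ x : G, f x = ∑ k ∈ Finset.range (Fintype.card G), f (g ^ k) := by
  have ho : orderOf g = Fintype.card G := by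
    rw [orderOf_eq_card_of_forall_mem_zpowers hg, Nat.card_eq_fintype_card]
  rw [← Fin.sum_univ_eq_sum_range (fun k => f (g ^ k)) (Fintype.card G)]
  refine (Fintype.sum_bijective (fun k : Fin (Fintype.card G) => g ^ (k : ℕ)) ?_ _ _
    (fun k => rfl)).symm
  rw [Fintype.bijective_iff_injective_and_card]
  refine ⟨fun i j hij => Fin.ext ?_, by simp⟩
  exact pow_injOn_Iio_orderOf (by rw [ho]; exact i.2) (by rw [ho]; exact j.2) hij

/-- periodicity of the inner character sum in the exponent of `γ`, mod `sd`. -/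
lemma sum_pow_shift (p : ℕ) {E : Type*} [Field E] [Fintype E] [Algebra (ZMod p) E]
    (b : E) (γ : Eˣ) (sd k j : ℕ) :
    ∑ x : Eˣ, eChar p E (b * (γ : E) ^ (j + sd * k) * (x : E) ^ sd)
      = ∑ x : Eˣ, eChar p E (b * (γ : E) ^ j * (x : E) ^ sd) := by
  refine Fintype.sum_equiv (Equiv.mulLeft (γ ^ k)) _ _ fun x => ?_
  congr 1
  show b * (γ : E) ^ (j + sd * k) * (x : E) ^ sd = b * (γ : E) ^ j * ((γ ^ k * x : Eˣ) : E) ^ sd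
  have h1 : ((γ ^ k * x : Eˣ) : E) = (γ : E) ^ k * (x : E) := by push_cast; ring
  rw [h1, mul_pow, ← pow_mul, pow_add, mul_comm k sd]
  ring

/-- In an extension `E/F` of finite fields with `|E| = |F|^t`, the norm of any element
is given by `x^(1+q+⋯+q^(t-1))` (as an element of `E`). -/
lemma norm_eq_pow_geomsum (p r t : ℕ) [Fact p.Prime] (ht0 : 0 < t)
    (F E : Type*) [Field F] [Fintype F] [Field E] [Fintype E]
    [Algebra F E] [Algebra (ZMod p) F] [Algebra (ZMod p) E]
    (hF : Fintype.card F = p ^ r) (hE : Fintype.card E = Fintype.card F ^ t)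
    (γ : Eˣ) (hγ : ∀ u' : Eˣ, u' ∈ Subgroup.zpowers γ) (x : E) :
    algebraMap F E (Algebra.norm F x) = x ^ (∑ i ∈ Finset.range t, Fintype.card F ^ i) := by
  haveI : CharP E p := charP_of_injective_algebraMap (algebraMap (ZMod p) E).injective p
  haveI : ExpChar E p := ExpChar.prime Fact.out
  have hq2 : 2 ≤ Fintype.card F := Fintype.one_lt_card
  have hcomm : ∀ y : F, iterateFrobenius E p r (algebraMap F E y) = algebraMap F E y := by
    intro y
    rw [iterateFrobenius_def, ← map_pow, ← hF, FiniteField.pow_card]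
  set φ₀ : E →ₐ[F] E := { toRingHom := iterateFrobenius E p r, commutes' := hcomm } with hφ₀def
  have hφ₀ : ∀ z : E, φ₀ z = z ^ Fintype.card F := by
    intro z; show iterateFrobenius E p r z = _
    rw [iterateFrobenius_def, hF]
  set φ : E ≃ₐ[F] E := AlgEquiv.ofBijective φ₀
    (Finite.injective_iff_bijective.mp (iterateFrobenius E p r).injective) with hφdef
  have hφ : ∀ z : E, φ z = z ^ Fintype.card F := hφ₀
  have hφk : ∀ (k : ℕ) (z : E), (φ ^ k) z = z ^ Fintype.card F ^ k := by
    intro k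
    induction k with
    | zero => intro z; simp
    | succ k ih =>
        intro z
        rw [pow_succ, AlgEquiv.mul_apply, hφ, ih, ← pow_mul, pow_succ, mul_comm (Fintype.card F ^ k)]
  have hrank : Module.finrank F E = t := by
    have hc := Module.card_eq_pow_finrank (K := F) (V := E)
    rw [hE] at hc
    exact (Nat.pow_right_injective hq2 hc.symm)
  have hcard : Fintype.card (E ≃ₐ[F] E) = t := by
    rw [← Nat.card_eq_fintype_card, IsGalois.card_aut_eq_finrank, hrank]
  have horder : orderOf γ = Fintype.card F ^ t - 1 := by
    rw [orderOf_eq_card_of_forall_mem_zpowers hγ, Nat.card_eq_fintype_card,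
      Fintype.card_units, hE]
  have hψinj : Function.Injective (fun k : Fin t => φ ^ (k : ℕ)) := by
    rcases eq_or_lt_of_le (show 1 ≤ t from ht0) with h1 | ht2
    · intro i j _
      haveI : Subsingleton (Fin t) := by rw [← h1]; infer_instance
      exact Subsingleton.elim i j
    · intro i j hij
      have h1 : ((γ : E)) ^ Fintype.card F ^ (i : ℕ) = (γ : E) ^ Fintype.card F ^ (j : ℕ) := by
        have := congrArg (fun σ : E ≃ₐ[F] E => σ (γ : E)) hij
        simpa [hφk] using this
      have h2 : (γ : Eˣ) ^ Fintype.card F ^ (i : ℕ) = γ ^ Fintype.card F ^ (j : ℕ) :=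
        Units.ext (by push_cast; exact h1)
      have h3 := pow_eq_pow_iff_modEq.mp h2
      rw [horder] at h3
      have hb : ∀ k : Fin t, Fintype.card F ^ (k : ℕ) < Fintype.card F ^ t - 1 := by
        intro k
        have hb1 : Fintype.card F ^ (k : ℕ) ≤ Fintype.card F ^ (t - 1) :=
          Nat.pow_le_pow_right (by omega) (by omega)
        have hb2 : Fintype.card F ^ (t - 1) * 2 ≤ Fintype.card F ^ (t - 1) * Fintype.card F :=
          Nat.mul_le_mul_left _ hq2
        have hb3 : Fintype.card F ^ (t - 1) * Fintype.card F = Fintype.card F ^ t := by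
          rw [← pow_succ]; congr 1; omega
        have hb4 : 1 ≤ Fintype.card F ^ (t - 1) := Nat.one_le_pow _ _ (by omega)
        have hb5 : Fintype.card F ≤ Fintype.card F ^ (t - 1) :=
          Nat.le_self_pow (by omega) _
        omega
      have heq : Fintype.card F ^ (i : ℕ) = Fintype.card F ^ (j : ℕ) := by
        have hi := Nat.mod_eq_of_lt (hb i)
        have hj := Nat.mod_eq_of_lt (hb j)
        unfold Nat.ModEq at h3
        omega
      exact Fin.ext (Nat.pow_right_injective hq2 heq)
  have hψbij : Function.Bijective (fun k : Fin t => φ ^ (k : ℕ)) :=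
    (Fintype.bijective_iff_injective_and_card _).mpr ⟨hψinj, by simp [hcard]⟩
  rw [Algebra.norm_eq_prod_automorphisms,
    ← Fintype.prod_bijective (fun k : Fin t => φ ^ (k : ℕ)) hψbij
      (fun k => x ^ Fintype.card F ^ (k : ℕ)) (fun σ => σ x) (fun k => (hφk _ x).symm),
    Finset.prod_pow_eq_pow_sum]
  congr 1
  exact Fin.sum_univ_eq_sum_range (fun i => Fintype.card F ^ i) t

lemma main_calc (p : ℕ) [Fact p.Prime] (F E : Type*) [Field F] [Fintype F] [Field E] [Fintype E]
    [Algebra F E] [Algebra (ZMod p) F] [Algebra (ZMod p) E]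
    (g : Fˣ) (hg : ∀ u' : Fˣ, u' ∈ Subgroup.zpowers g) (γ : Eˣ)
    (mt sd u v t0 i0 : ℕ) (hu0 : 0 < u)
    (hN : Fintype.card F - 1 = u * v)
    (hperiod : sd ∣ t0 * u)
    (hg' : algebraMap F E ((g : Fˣ) : F) = (γ : E) ^ t0)
    (a a0 : F) (ha : a ≠ 0) (hmtF : ((mt : ℕ) : F) ≠ 0) (ha0 : a0 = -(mt : F) * a⁻¹) :
    MM p F E ((γ : Eˣ) : E) a mt sd i0 =
      (1 / (u : ℂ)) * ∑ j ∈ Finset.range u,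
        (∑ x : Eˣ, eChar p E (algebraMap F E a0 * ((γ : Eˣ) : E) ^ (t0 * j + i0) * (x : E) ^ sd)) *
        (∑ c : Fˣ, eChar p F ((g : F) ^ j * (c : F) ^ u)) := by
  classical
  have ha0ne : a0 ≠ 0 := by
    rw [ha0]; exact mul_ne_zero (neg_ne_zero.mpr hmtF) (inv_ne_zero ha)
  set N := Fintype.card F - 1 with hNdef
  have hcardU : Fintype.card Fˣ = N := by rw [hNdef]; exact Fintype.card_units F
  have hgN : ((g : Fˣ) : F) ^ N = 1 := by
    have h := pow_card_eq_one (x := g)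
    rw [hcardU] at h
    calc ((g : Fˣ) : F) ^ N = ((g ^ N : Fˣ) : F) := (Units.val_pow_eq_pow_val _ _).symm
      _ = 1 := by rw [h]; rfl
  set S : ℕ → ℂ := fun e =>
    ∑ x : Eˣ, eChar p E (algebraMap F E a0 * (γ : E) ^ e * (x : E) ^ sd) with hSdef
  set f1 : ℕ → ℂ := fun k => eChar p F (((g : Fˣ) : F) ^ k) with hf1def
  have hS : ∀ (e w : ℕ), sd ∣ w → S (e + w) = S e := by
    rintro e w ⟨kk, rfl⟩
    exact sum_pow_shift p _ γ sd kk e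
  -- Step 1 : MM as a sum over powers of g
  have key1 : MM p F E ((γ : Eˣ) : E) a mt sd i0
      = ∑ k ∈ Finset.range N, f1 k * S (t0 * k + i0) := by
    set A0 : Fˣ := Units.mk0 a0 ha0ne with hA0def
    have e1 : ∀ c : Fˣ,
        eChar p F ((c : F)) * (∑ x : Eˣ,
            eChar p E (algebraMap F E a0 * algebraMap F E (c : F) * (γ : E) ^ i0 * (x : E) ^ sd))
        = eChar p F (-(((mt : F))⁻¹ * ((Equiv.mulLeft A0) c : F) * a)) *
          ∑ x : Eˣ, eChar p E (algebraMap F E (((Equiv.mulLeft A0) c : Fˣ) : F) * (γ : E) ^ i0 * (x : E) ^ sd) := by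
      intro c
      have hval : (((Equiv.mulLeft A0) c : Fˣ) : F) = a0 * (c : F) := rfl
      congr 1
      · congr 1
        rw [hval, ha0]
        field_simp
      · refine Finset.sum_congr rfl fun x _ => ?_
        rw [hval, map_mul]
    have hA := Fintype.sum_equiv (Equiv.mulLeft A0)
      (fun c : Fˣ => eChar p F ((c : F)) * (∑ x : Eˣ,
          eChar p E (algebraMap F E a0 * algebraMap F E (c : F) * (γ : E) ^ i0 * (x : E) ^ sd)))
      (fun c : Fˣ => eChar p F (-(((mt : F))⁻¹ * (c : F) * a)) *
          ∑ x : Eˣ, eChar p E (algebraMap F E ((c : Fˣ) : F) * (γ : E) ^ i0 * (x : E) ^ sd))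
      e1
    rw [MM, ← hA, sum_gen g hg, hcardU]
    refine Finset.sum_congr rfl fun k _ => ?_
    have h1 : ((g ^ k : Fˣ) : F) = ((g : Fˣ) : F) ^ k := Units.val_pow_eq_pow_val _ _
    have h2 : algebraMap F E (((g : Fˣ) : F) ^ k) = (γ : E) ^ (t0 * k) := by
      rw [map_pow, hg', ← pow_mul]
    congr 1
    refine Finset.sum_congr rfl fun x _ => ?_
    congr 1
    rw [h1, h2, pow_add]
    ring
  -- Step 2 : the `c`-sum on the RHS
  have key2 : ∀ j, (∑ c : Fˣ, eChar p F ((g : F) ^ j * (c : F) ^ u))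
      = (u : ℂ) * ∑ n ∈ Finset.range v, f1 (j + u * n) := by
    intro j
    rw [sum_gen g hg]
    have hcard2 : Fintype.card Fˣ = v * u := by rw [hcardU, hN, mul_comm]
    rw [hcard2, sum_range_mul_split (fun k => eChar p F ((g : F) ^ j * ((g ^ k : Fˣ) : F) ^ u)) v u]
    have harg : ∀ n m : ℕ, (g : F) ^ j * ((g ^ (n + v * m) : Fˣ) : F) ^ u
        = (((g : Fˣ) : F)) ^ (j + u * n) * (((g : Fˣ) : F) ^ N) ^ m := by
      intro n m
      rw [Units.val_pow_eq_pow_val, ← pow_mul, ← pow_add, ← pow_mul, ← pow_add]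
      congr 1
      rw [hN]
      ring
    calc ∑ n ∈ Finset.range v, ∑ m ∈ Finset.range u,
            eChar p F ((g : F) ^ j * ((g ^ (n + v * m) : Fˣ) : F) ^ u)
        = ∑ n ∈ Finset.range v, ∑ m ∈ Finset.range u, f1 (j + u * n) := by
          refine Finset.sum_congr rfl fun n _ => Finset.sum_congr rfl fun m _ => ?_
          rw [hf1def]
          congr 1
          rw [harg n m, hgN, one_pow, mul_one]
      _ = ∑ n ∈ Finset.range v, (u : ℂ) * f1 (j + u * n) := by
          refine Finset.sum_congr rfl fun n _ => ?_
          rw [Finset.sum_const, Finset.card_range, nsmul_eq_mul]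
      _ = (u : ℂ) * ∑ n ∈ Finset.range v, f1 (j + u * n) := by rw [← Finset.mul_sum]
  -- Step 3 : assemble
  have key3 : ∀ j n : ℕ, S (t0 * (j + u * n) + i0) = S (t0 * j + i0) := by
    intro j n
    have harg : t0 * (j + u * n) + i0 = (t0 * j + i0) + (t0 * u) * n := by ring
    rw [harg]
    exact hS _ _ (Dvd.dvd.mul_right hperiod n)
  rw [key1, hN, sum_range_mul_split (fun k => f1 k * S (t0 * k + i0)) u v]
  have hrhs : ∑ j ∈ Finset.range u, S (t0 * j + i0) *
        (∑ c : Fˣ, eChar p F ((g : F) ^ j * (c : F) ^ u))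
      = (u : ℂ) * ∑ j ∈ Finset.range u, ∑ n ∈ Finset.range v, f1 (j + u * n) * S (t0 * j + i0) := by
    rw [Finset.mul_sum]
    refine Finset.sum_congr rfl fun j _ => ?_
    rw [key2 j, ← Finset.sum_mul]
    ring
  rw [hrhs, ← mul_assoc, one_div, inv_mul_cancel₀ (by exact_mod_cast hu0.ne' : (u : ℂ) ≠ 0), one_mul]
  refine Finset.sum_congr rfl fun j _ => Finset.sum_congr rfl fun n _ => ?_
  rw [key3 j n]

/-- If `p ∤ m/t`, `d ∣ h` and `a ≠ 0` then, with `a_0 = −(m/t)·a⁻¹`,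
`t_0 = (q^t−1)/(q−1)` and `u = s/(d·l)`:  `l = gcd(t, s/d) = gcd(t_0, s/d)` and
`M_t = (1/u)·Σ_{j=0}^{u−1} (Σ_{x∈E^*} e_t(a_0·γ^{t_0·j+i_0}·x^{s/d}))·(Σ_{c∈F^*} e_1(g^j·c^u))`. -/
theorem stmt7 (p r m s h t d l u t0 i0 : ℕ) [Fact p.Prime] (hr : 0 < r) (hm : 2 ≤ m)
    (ht : t ∣ m) (ht0 : 0 < t)
    (F E : Type*) [Field F] [Fintype F] [Field E] [Fintype E]
    [Algebra F E] [Algebra (ZMod p) F] [Algebra (ZMod p) E]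
    (hF : Fintype.card F = p ^ r) (hE : Fintype.card E = Fintype.card F ^ t)
    (g : Fˣ) (hg : ∀ u' : Fˣ, u' ∈ Subgroup.zpowers g)
    (γ : Eˣ) (hγ : ∀ u' : Eˣ, u' ∈ Subgroup.zpowers γ)
    (hγg : Algebra.norm F ((γ : Eˣ) : E) = (g : F))
    (hs : 0 < s) (hsq : s ∣ Fintype.card F - 1) (hh : h < s)
    (hd : d = Nat.gcd (m / t) s) (hl : l = Nat.gcd t (s / d))
    (hu : u = s / (d * l)) (hT0 : t0 = (Fintype.card F ^ t - 1) / (Fintype.card F - 1))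
    (hpmt : ¬ p ∣ m / t) (hdh : d ∣ h)
    (hi0 : i0 < s / d ∧ (m / (d * t)) * i0 ≡ h / d [MOD s / d])
    (a : F) (ha : a ≠ 0) (a0 : F) (ha0 : a0 = -(((m / t : ℕ) : F)) * a⁻¹) :
    l = Nat.gcd t0 (s / d) ∧
    MM p F E ((γ : Eˣ) : E) a (m / t) (s / d) i0 =
      (1 / (u : ℂ)) * ∑ j ∈ Finset.range u,
        (∑ x : Eˣ, eChar p E (algebraMap F E a0 * ((γ : Eˣ) : E) ^ (t0 * j + i0) * (x : E) ^ (s / d))) *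
        (∑ c : Fˣ, eChar p F ((g : F) ^ j * (c : F) ^ u)) := by
  obtain ⟨hi0lt, hi0mod⟩ := hi0
  haveI : CharP F p := charP_of_injective_algebraMap (algebraMap (ZMod p) F).injective p
  have hq2 : 2 ≤ Fintype.card F := Fintype.one_lt_card
  have hd0 : 0 < d := by rw [hd]; exact Nat.gcd_pos_of_pos_right _ hs
  have hl0 : 0 < l := by rw [hl]; exact Nat.gcd_pos_of_pos_left _ ht0
  have hds : d ∣ s := by rw [hd]; exact Nat.gcd_dvd_right _ _
  have hlsd : l ∣ s / d := by rw [hl]; exact Nat.gcd_dvd_right _ _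
  have hlt' : l ∣ t := by rw [hl]; exact Nat.gcd_dvd_left _ _
  have hdls : d * l ∣ s := by
    obtain ⟨w, hw⟩ := hlsd
    exact ⟨w, by rw [mul_assoc, ← hw, Nat.mul_div_cancel' hds]⟩
  have hu0 : 0 < u := by
    rw [hu]; exact Nat.div_pos (Nat.le_of_dvd hs hdls) (Nat.mul_pos hd0 hl0)
  have hlu : l * u = s / d := by
    obtain ⟨w, hw⟩ := hdls
    have hw2 : u = w := by rw [hu, hw, Nat.mul_div_cancel_left _ (Nat.mul_pos hd0 hl0)]
    have hw3 : s / d = l * w := by rw [hw, mul_assoc, Nat.mul_div_cancel_left _ hd0]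
    rw [hw2, hw3]
  have hsdlt : s / d ∣ s := ⟨d, (Nat.div_mul_cancel hds).symm⟩
  have hsdN : s / d ∣ Fintype.card F - 1 := hsdlt.trans hsq
  have hus : u ∣ s := ⟨d * l, by rw [hu]; exact (Nat.div_mul_cancel hdls).symm⟩
  have huN : u ∣ Fintype.card F - 1 := hus.trans hsq
  have hqmod : 1 ≡ Fintype.card F [MOD s / d] :=
    (Nat.modEq_iff_dvd' (by omega)).mpr hsdN
  have ht0sum : t0 = ∑ i ∈ Finset.range t, Fintype.card F ^ i := by
    rw [hT0, ← Nat.geomSum_eq hq2]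
  have hmodt : t0 ≡ t [MOD s / d] := by
    rw [ht0sum]
    have hall : ∀ n : ℕ, (∑ i ∈ Finset.range n, Fintype.card F ^ i) ≡ n [MOD s / d] := by
      intro n
      induction n with
      | zero => simpa using Nat.ModEq.refl 0
      | succ n ih =>
          rw [Finset.sum_range_succ]
          have hpow : Fintype.card F ^ n ≡ 1 [MOD s / d] := by
            simpa using (hqmod.symm.pow n)
          exact ih.add hpow
    exact hall t
  have part1 : l = Nat.gcd t0 (s / d) := by
    rw [hl, Nat.gcd_comm t, Nat.gcd_comm t0, Nat.gcd_rec (s / d) t, Nat.gcd_rec (s / d) t0]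
    have hmm : t0 % (s / d) = t % (s / d) := hmodt
    rw [hmm]
  refine ⟨part1, ?_⟩
  have hstu : (s / d) ∣ t * u := by
    have h1 : t * u = (t / l) * (l * u) := by
      rw [← mul_assoc, Nat.div_mul_cancel hlt']
    rw [h1, hlu]
    exact dvd_mul_left _ _
  have hperiod : (s / d) ∣ t0 * u := by
    have h2 : t0 * u ≡ t * u [MOD s / d] := hmodt.mul_right u
    have h3 : t * u ≡ 0 [MOD s / d] := Nat.modEq_zero_iff_dvd.mpr hstu
    exact Nat.modEq_zero_iff_dvd.mp (h2.trans h3)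
  have hg2 : algebraMap F E ((g : Fˣ) : F) = ((γ : Eˣ) : E) ^ t0 := by
    rw [← hγg, norm_eq_pow_geomsum p r t ht0 F E hF hE γ hγ, ht0sum]
  have hmtF : ((m / t : ℕ) : F) ≠ 0 := fun hc => hpmt ((CharP.cast_eq_zero_iff F p _).mp hc)
  exact main_calc p F E g hg γ (m / t) (s / d) u ((Fintype.card F - 1) / u) t0 i0 hu0
    (Nat.mul_div_cancel' huN).symm hperiod hg2 a a0 ha hmtF ha0

end
end
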